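/- arXiv:0908.0971 — 2 statements merged into one kernel-verified Lean document; each statement's English description precedes it below -/
import Mathlib

section
/- Let F be a field of characteristic 2 and for k = 3, 5 let e_n(uv + x^k) denote the F-dimension of F[[u,v,x]]/(uv + x^k, u^q, v^q, x^q) with q = 2^n. Then for every n ≥ 1, ( e_n(uv+x^5) − 4 e_{n−1}(uv+x^5) ) − ( e_n(uv+x^3) − 4 e_{n−1}(uv+x^3) ) equals 2 if n is even and 0 if n is odd. -/
open scoped Classical

/-- The Hilbert–Kunz-type dimension: the `F`-dimension of
`F[[x_i : i ∈ σ]] / (f, x_i^q : i ∈ σ)`. -/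
noncomputable def hkDim (F : Type) [Field F] (σ : Type) (f : MvPowerSeries σ F) (q : ℕ) : ℕ :=
  Module.finrank F
    (MvPowerSeries σ F ⧸
      Ideal.span ({f} ∪ Set.range fun i : σ => (MvPowerSeries.X i : MvPowerSeries σ F) ^ q))

namespace HKaux

open MvPowerSeries Finset

variable (F : Type) [Field F]

/-- exponent triple as a finitely supported function on `Fin 3` -/
noncomputable def ex (a b c : ℕ) : Fin 3 →₀ ℕ :=
  Finsupp.single 0 a + Finsupp.single 1 b + Finsupp.single 2 c

lemma ex_apply0 (a b c : ℕ) : ex a b c 0 = a := by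
  simp [ex, Finsupp.single_apply]

lemma ex_apply1 (a b c : ℕ) : ex a b c 1 = b := by
  simp [ex, Finsupp.single_apply]

lemma ex_apply2 (a b c : ℕ) : ex a b c 2 = c := by
  simp [ex, Finsupp.single_apply]

lemma ex_eta (m : Fin 3 →₀ ℕ) : ex (m 0) (m 1) (m 2) = m := by
  ext i
  fin_cases i
  · exact ex_apply0 _ _ _
  · exact ex_apply1 _ _ _
  · exact ex_apply2 _ _ _

lemma ex_eq_iff {a b c d e f : ℕ} : ex a b c = ex d e f ↔ a = d ∧ b = e ∧ c = f := by
  constructor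
  · intro h
    refine ⟨?_, ?_, ?_⟩
    · rw [← ex_apply0 a b c, h, ex_apply0]
    · rw [← ex_apply1 a b c, h, ex_apply1]
    · rw [← ex_apply2 a b c, h, ex_apply2]
  · rintro ⟨rfl, rfl, rfl⟩; rfl

lemma ex_le_iff {a b c d e f : ℕ} : ex a b c ≤ ex d e f ↔ a ≤ d ∧ b ≤ e ∧ c ≤ f := by
  rw [Finsupp.le_def]
  constructor
  · intro h
    refine ⟨?_, ?_, ?_⟩
    · have := h 0; rwa [ex_apply0, ex_apply0] at this
    · have := h 1; rwa [ex_apply1, ex_apply1] at this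
    · have := h 2; rwa [ex_apply2, ex_apply2] at this
  · rintro ⟨h1, h2, h3⟩ i
    fin_cases i
    · rw [show ((⟨0, by norm_num⟩ : Fin 3)) = 0 from rfl, ex_apply0, ex_apply0]; exact h1
    · rw [show ((⟨1, by norm_num⟩ : Fin 3)) = 1 from rfl, ex_apply1, ex_apply1]; exact h2
    · rw [show ((⟨2, by norm_num⟩ : Fin 3)) = 2 from rfl, ex_apply2, ex_apply2]; exact h3

lemma ex_add (a b c d e f : ℕ) : ex a b c + ex d e f = ex (a + d) (b + e) (c + f) := by
  ext i
  rw [Finsupp.add_apply]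
  fin_cases i
  · rw [show ((⟨0, by norm_num⟩ : Fin 3)) = 0 from rfl, ex_apply0, ex_apply0, ex_apply0]
  · rw [show ((⟨1, by norm_num⟩ : Fin 3)) = 1 from rfl, ex_apply1, ex_apply1, ex_apply1]
  · rw [show ((⟨2, by norm_num⟩ : Fin 3)) = 2 from rfl, ex_apply2, ex_apply2, ex_apply2]

lemma ex_sub (a b c d e f : ℕ) : ex a b c - ex d e f = ex (a - d) (b - e) (c - f) := by
  ext i
  rw [Finsupp.tsub_apply]
  fin_cases i
  · rw [show ((⟨0, by norm_num⟩ : Fin 3)) = 0 from rfl, ex_apply0, ex_apply0, ex_apply0]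
  · rw [show ((⟨1, by norm_num⟩ : Fin 3)) = 1 from rfl, ex_apply1, ex_apply1, ex_apply1]
  · rw [show ((⟨2, by norm_num⟩ : Fin 3)) = 2 from rfl, ex_apply2, ex_apply2, ex_apply2]

lemma single0 (n : ℕ) : Finsupp.single (0 : Fin 3) n = ex n 0 0 := by
  simp [ex]

lemma single1 (n : ℕ) : Finsupp.single (1 : Fin 3) n = ex 0 n 0 := by
  simp [ex]

lemma single2 (n : ℕ) : Finsupp.single (2 : Fin 3) n = ex 0 0 n := by
  simp [ex]

/-- the monomial `u^a v^b x^c` -/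
noncomputable def mon (a b c : ℕ) : MvPowerSeries (Fin 3) F :=
  monomial (ex a b c) 1

lemma mon_mul (a b c d e f : ℕ) :
    mon F a b c * mon F d e f = mon F (a + d) (b + e) (c + f) := by
  rw [mon, mon, mon, monomial_mul_monomial, one_mul, ex_add]

lemma X01_eq : (X 0 * X 1 : MvPowerSeries (Fin 3) F) = mon F 1 1 0 := by
  rw [X, X, monomial_mul_monomial, one_mul, single0, single1, ex_add, mon]

lemma X0_pow (n : ℕ) : (X 0 ^ n : MvPowerSeries (Fin 3) F) = mon F n 0 0 := by
  rw [X_pow_eq, single0, mon]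

lemma X1_pow (n : ℕ) : (X 1 ^ n : MvPowerSeries (Fin 3) F) = mon F 0 n 0 := by
  rw [X_pow_eq, single1, mon]

lemma X2_pow (n : ℕ) : (X 2 ^ n : MvPowerSeries (Fin 3) F) = mon F 0 0 n := by
  rw [X_pow_eq, single2, mon]

/-- the generating set of the ideal -/
def gens (k q : ℕ) : Set (MvPowerSeries (Fin 3) F) :=
  {X 0 * X 1 + X 2 ^ k} ∪ Set.range fun i : Fin 3 => (X i : MvPowerSeries (Fin 3) F) ^ q

/-- the ideal -/
noncomputable def I (k q : ℕ) : Ideal (MvPowerSeries (Fin 3) F) := Ideal.span (gens F k q)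

lemma f0_mem (k q : ℕ) : (X 0 * X 1 + X 2 ^ k : MvPowerSeries (Fin 3) F) ∈ I F k q :=
  Ideal.subset_span (Set.mem_union_left _ rfl)

lemma Xpow_mem (k q : ℕ) (i : Fin 3) : (X i : MvPowerSeries (Fin 3) F) ^ q ∈ I F k q :=
  Ideal.subset_span (Set.mem_union_right _ ⟨i, rfl⟩)

lemma mem_I_of_c_big {k q : ℕ} (a b c : ℕ) (h : q ≤ c) : mon F a b c ∈ I F k q := by
  have : mon F a b (c - q) * (X 2 ^ q : MvPowerSeries (Fin 3) F) = mon F a b c := by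
    rw [X2_pow, mon_mul, show c - q + q = c from by omega]
    norm_num
  rw [← this]
  exact Ideal.mul_mem_left _ _ (Xpow_mem F k q 2)

lemma mem_I_of_a_big {k q : ℕ} (a b c : ℕ) (h : q ≤ a) : mon F a b c ∈ I F k q := by
  have : mon F (a - q) b c * (X 0 ^ q : MvPowerSeries (Fin 3) F) = mon F a b c := by
    rw [X0_pow, mon_mul, show a - q + q = a from by omega]
    norm_num
  rw [← this]
  exact Ideal.mul_mem_left _ _ (Xpow_mem F k q 0)

lemma mem_I_of_b_big {k q : ℕ} (a b c : ℕ) (h : q ≤ b) : mon F a b c ∈ I F k q := by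
  have : mon F a (b - q) c * (X 1 ^ q : MvPowerSeries (Fin 3) F) = mon F a b c := by
    rw [X1_pow, mon_mul, show b - q + q = b from by omega]
    norm_num
  rw [← this]
  exact Ideal.mul_mem_left _ _ (Xpow_mem F k q 1)

lemma mon_mul_f0 (k : ℕ) (a b c : ℕ) :
    mon F a b c * (X 0 * X 1 + X 2 ^ k : MvPowerSeries (Fin 3) F) =
      mon F (a + 1) (b + 1) c + mon F a b (c + k) := by
  rw [X01_eq, X2_pow, mul_add, mon_mul, mon_mul]
  norm_num

lemma mem_I_of_min_big {k q : ℕ} :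
    ∀ a b c : ℕ, q ≤ min a b * k + c → mon F a b c ∈ I F k q := by
  intro a
  induction a with
  | zero =>
    intro b c h
    simp only [Nat.zero_min, zero_mul, zero_add] at h
    exact mem_I_of_c_big F 0 b c h
  | succ a ih =>
    intro b c h
    match b with
    | 0 =>
      simp only [Nat.min_zero, zero_mul, zero_add] at h
      exact mem_I_of_c_big F _ 0 c h
    | b + 1 =>
      have h' : q ≤ min a b * k + (c + k) := by
        have hm : min (a + 1) (b + 1) = min a b + 1 := Nat.succ_min_succ a b
        rw [hm, add_mul, one_mul] at h
        omega
      have hrec := ih b (c + k) h'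
      have key : mon F (a + 1) (b + 1) c =
          mon F a b c * (X 0 * X 1 + X 2 ^ k) - mon F a b (c + k) := by
        rw [mon_mul_f0, add_sub_cancel_right]
      rw [key]
      exact sub_mem (Ideal.mul_mem_left _ _ (f0_mem F k q)) hrec

variable [CharP F 2]

lemma charR2 : (2 : MvPowerSeries (Fin 3) F) = 0 := by
  have h1 : ((2 : ℕ) : F) = 0 := CharP.cast_eq_zero F 2
  have h2 : ((2 : ℕ) : MvPowerSeries (Fin 3) F) = (C : F →+* MvPowerSeries (Fin 3) F) ((2 : ℕ) : F) :=
    (map_natCast (C : F →+* MvPowerSeries (Fin 3) F) 2).symm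
  rw [h1, map_zero] at h2
  exact_mod_cast h2

lemma mk_swap {k q : ℕ} (a b c : ℕ) :
    Ideal.Quotient.mk (I F k q) (mon F a b (c + k)) =
      Ideal.Quotient.mk (I F k q) (mon F (a + 1) (b + 1) c) := by
  rw [Ideal.Quotient.eq]
  have h : mon F a b (c + k) - mon F (a + 1) (b + 1) c =
      mon F a b c * (X 0 * X 1 + X 2 ^ k) -
        (2 : MvPowerSeries (Fin 3) F) * mon F (a + 1) (b + 1) c := by
    rw [mon_mul_f0]; ring
  rw [h, charR2, zero_mul, sub_zero]
  exact Ideal.mul_mem_left _ _ (f0_mem F k q)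

lemma mk_normal {k q : ℕ} (hk : 0 < k) :
    ∀ c a b : ℕ, Ideal.Quotient.mk (I F k q) (mon F a b c) =
      if a + c / k < q ∧ b + c / k < q ∧ min a b * k + c < q then
        Ideal.Quotient.mk (I F k q) (mon F (a + c / k) (b + c / k) (c % k))
      else 0 := by
  intro c
  induction c using Nat.strong_induction_on with
  | _ c ih =>
    intro a b
    rcases lt_or_ge c k with hc | hc
    · rw [Nat.div_eq_of_lt hc, Nat.mod_eq_of_lt hc]
      simp only [add_zero]
      split_ifs with h
      · rfl
      · rw [Ideal.Quotient.eq_zero_iff_mem]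
        push_neg at h
        by_cases h1 : a < q
        · by_cases h2 : b < q
          · exact mem_I_of_min_big F a b c (h h1 h2)
          · exact mem_I_of_b_big F a b c (by omega)
        · exact mem_I_of_a_big F a b c (by omega)
    · have hc' : c = (c - k) + k := by omega
      rw [hc', mk_swap, ih (c - k) (by omega) (a + 1) (b + 1)]
      have e1 : (c - k + k) / k = (c - k) / k + 1 := Nat.add_div_right _ hk
      have e2 : (c - k + k) % k = (c - k) % k := Nat.add_mod_right _ _
      have e3 : min (a + 1) (b + 1) = min a b + 1 := Nat.succ_min_succ a b
      rw [e1, e2, e3]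
      have e4 : a + 1 + (c - k) / k = a + ((c - k) / k + 1) := by omega
      have e5 : b + 1 + (c - k) / k = b + ((c - k) / k + 1) := by omega
      have e6 : (min a b + 1) * k + (c - k) = min a b * k + (c - k + k) := by
        rw [add_mul, one_mul]; omega
      rw [e4, e5, e6]

lemma two_eq_zero : (2 : F) = 0 := by
  have := CharP.cast_eq_zero F 2
  exact_mod_cast this

/-- the standard monomials -/
def S (k q : ℕ) : Finset ((ℕ × ℕ) × ℕ) :=
  ((range q ×ˢ range q) ×ˢ range k).filter fun p => min p.1.1 p.1.2 * k + p.2 < q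

lemma mem_S {k q : ℕ} {p : (ℕ × ℕ) × ℕ} :
    p ∈ S k q ↔ (p.1.1 < q ∧ p.1.2 < q ∧ p.2 < k) ∧ min p.1.1 p.1.2 * k + p.2 < q := by
  simp [S, Finset.mem_filter, Finset.mem_product, and_assoc]

/-- the normal-form coefficient functional -/
noncomputable def phi (k q : ℕ) :
    MvPowerSeries (Fin 3) F →ₗ[F] (↥(S k q) → F) :=
  LinearMap.pi fun p =>
    ∑ s ∈ range (min (p : (ℕ × ℕ) × ℕ).1.1 (p : (ℕ × ℕ) × ℕ).1.2 + 1),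
      coeff (ex ((p : (ℕ × ℕ) × ℕ).1.1 - s) ((p : (ℕ × ℕ) × ℕ).1.2 - s)
        (s * k + (p : (ℕ × ℕ) × ℕ).2))

lemma mem_S_mk {k q A B T : ℕ} :
    ((A, B), T) ∈ S k q ↔ (A < q ∧ B < q ∧ T < k) ∧ min A B * k + T < q :=
  mem_S

lemma phi_apply {k q : ℕ} (f : MvPowerSeries (Fin 3) F) (A B T : ℕ)
    (hp : ((A, B), T) ∈ S k q) :
    phi F k q f ⟨((A, B), T), hp⟩ =
      ∑ s ∈ range (min A B + 1), coeff (ex (A - s) (B - s) (s * k + T)) f := by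
  simp [phi]

lemma phi_mon {k q : ℕ} (hk : 0 < k) (a b c : ℕ) (p : ↥(S k q)) :
    phi F k q (mon F a b c) p =
      if (p : (ℕ × ℕ) × ℕ) = ((a + c / k, b + c / k), c % k) then 1 else 0 := by
  obtain ⟨⟨⟨A, B⟩, T⟩, hp⟩ := p
  rw [phi_apply]
  obtain ⟨⟨hA, hB, hT⟩, hmin⟩ := mem_S_mk.mp hp
  simp only [mon, coeff_monomial, ex_eq_iff]
  by_cases hnf : ((A, B), T) = (((a + c / k, b + c / k), c % k) : (ℕ × ℕ) × ℕ)
  · rw [if_pos hnf]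
    simp only [Prod.mk.injEq] at hnf
    obtain ⟨⟨hA', hB'⟩, hT'⟩ := hnf
    rw [Finset.sum_eq_single_of_mem (c / k)]
    · refine if_pos ⟨by omega, by omega, ?_⟩
      rw [hT', mul_comm]
      exact Nat.div_add_mod c k
    · rw [mem_range]
      omega
    · intro s hs hne
      rw [if_neg]
      rintro ⟨h1, h2, h3⟩
      apply hne
      have : c / k = s := by
        rw [← h3, mul_comm, Nat.mul_add_div hk, Nat.div_eq_of_lt hT, add_zero]
      omega
  · rw [if_neg hnf]
    apply Finset.sum_eq_zero
    intro s hs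
    rw [if_neg]
    rintro ⟨h1, h2, h3⟩
    apply hnf
    rw [mem_range] at hs
    have hdiv : c / k = s := by
      rw [← h3, mul_comm, Nat.mul_add_div hk, Nat.div_eq_of_lt hT, add_zero]
    have hmod : c % k = T := by
      rw [← h3, mul_comm, Nat.mul_add_mod, Nat.mod_eq_of_lt hT]
    have : A = a + c / k := by omega
    have : B = b + c / k := by omega
    simp only [Prod.mk.injEq]
    omega

lemma phi_X_pow {k q : ℕ} (r : MvPowerSeries (Fin 3) F) (i : Fin 3) :
    phi F k q (r * X i ^ q) = 0 := by
  funext p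
  obtain ⟨⟨⟨A, B⟩, T⟩, hp⟩ := p
  obtain ⟨⟨hA, hB, hT⟩, hmin⟩ := mem_S_mk.mp hp
  rw [Pi.zero_apply, phi_apply]
  apply Finset.sum_eq_zero
  intro s hs
  rw [mem_range] at hs
  rw [X_pow_eq, coeff_mul_monomial, if_neg]
  intro hle
  rw [Finsupp.single_le_iff] at hle
  fin_cases i
  · rw [show ((⟨0, by norm_num⟩ : Fin 3)) = 0 from rfl, ex_apply0] at hle; omega
  · rw [show ((⟨1, by norm_num⟩ : Fin 3)) = 1 from rfl, ex_apply1] at hle; omega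
  · rw [show ((⟨2, by norm_num⟩ : Fin 3)) = 2 from rfl, ex_apply2] at hle
    have hsle : s ≤ min A B := by omega
    have : s * k + T ≤ min A B * k + T :=
      Nat.add_le_add_right (Nat.mul_le_mul_right k hsle) T
    omega

variable {F}

lemma phi_f0 {k q : ℕ} (hk : 0 < k) (r : MvPowerSeries (Fin 3) F) :
    phi F k q (r * (X 0 * X 1 + X 2 ^ k)) = 0 := by
  funext p
  obtain ⟨⟨⟨A, B⟩, T⟩, hp⟩ := p
  obtain ⟨⟨hA, hB, hT⟩, hmin⟩ := mem_S_mk.mp hp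
  rw [Pi.zero_apply, phi_apply]
  have key : ∀ s : ℕ,
      coeff (ex (A - s) (B - s) (s * k + T)) (r * (X 0 * X 1 + X 2 ^ k)) =
        (if s < min A B then coeff (ex (A - s - 1) (B - s - 1) (s * k + T)) r else 0) +
          (if 1 ≤ s then coeff (ex (A - s) (B - s) (s * k + T - k)) r else 0) := by
    intro s
    rw [mul_add, map_add]
    congr 1
    · rw [X01_eq, mon, coeff_mul_monomial]
      by_cases hlt : s < min A B
      · rw [if_pos, if_pos hlt, ex_sub, mul_one, Nat.sub_zero]
        rw [ex_le_iff]
        omega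
      · rw [if_neg hlt, if_neg]
        rw [ex_le_iff]
        omega
    · rw [X2_pow, mon, coeff_mul_monomial]
      by_cases hs1 : 1 ≤ s
      · rw [if_pos, if_pos hs1, ex_sub, mul_one, Nat.sub_zero, Nat.sub_zero]
        rw [ex_le_iff]
        refine ⟨by omega, by omega, ?_⟩
        calc k = 1 * k := (one_mul k).symm
        _ ≤ s * k := Nat.mul_le_mul_right k hs1
        _ ≤ s * k + T := Nat.le_add_right _ _
      · rw [if_neg hs1, if_neg]
        rw [ex_le_iff]
        rintro ⟨-, -, hc⟩
        have hs0 : s = 0 := by omega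
        subst hs0
        simp only [zero_mul, zero_add] at hc
        omega
  rw [Finset.sum_congr rfl fun s _ => key s, Finset.sum_add_distrib]
  have h1 : ∑ s ∈ range (min A B + 1),
      (if s < min A B then coeff (ex (A - s - 1) (B - s - 1) (s * k + T)) r else 0) =
      ∑ s ∈ range (min A B), coeff (ex (A - s - 1) (B - s - 1) (s * k + T)) r := by
    rw [Finset.sum_range_succ, if_neg (lt_irrefl _), add_zero]
    exact Finset.sum_congr rfl fun s hs => if_pos (mem_range.mp hs)
  have h2 : ∑ s ∈ range (min A B + 1),
      (if 1 ≤ s then coeff (ex (A - s) (B - s) (s * k + T - k)) r else 0) =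
      ∑ s ∈ range (min A B), coeff (ex (A - s - 1) (B - s - 1) (s * k + T)) r := by
    rw [Finset.sum_range_succ']
    rw [if_neg (by omega : ¬ (1:ℕ) ≤ 0), add_zero]
    apply Finset.sum_congr rfl
    intro s hs
    rw [if_pos (by omega : 1 ≤ s + 1)]
    congr 1
    have e1 : (s + 1) * k + T - k = s * k + T := by
      rw [add_one_mul, add_right_comm, Nat.add_sub_cancel]
    rw [e1, show A - (s + 1) = A - s - 1 from by omega,
      show B - (s + 1) = B - s - 1 from by omega]
  rw [h1, h2, ← Finset.sum_add_distrib]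
  apply Finset.sum_eq_zero
  intro s _
  rw [← two_mul, two_eq_zero F, zero_mul]

lemma phi_I {k q : ℕ} (hk : 0 < k) {g : MvPowerSeries (Fin 3) F} (hg : g ∈ I F k q) :
    phi F k q g = 0 := by
  let J : Ideal (MvPowerSeries (Fin 3) F) :=
    { carrier := {x | ∀ r, phi F k q (r * x) = 0}
      add_mem' := fun {x y} hx hy r => by rw [mul_add, map_add, hx r, hy r, add_zero]
      zero_mem' := fun r => by rw [mul_zero, map_zero]
      smul_mem' := fun c x hx r => by
        rw [smul_eq_mul, ← mul_assoc]
        exact hx (r * c) }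
  have hJ : I F k q ≤ J := by
    rw [I, Ideal.span_le]
    rintro x (rfl | ⟨i, rfl⟩)
    · exact fun r => phi_f0 hk r
    · exact fun r => phi_X_pow F r i
  have := hJ hg 1
  rwa [one_mul] at this

variable (F)

/-- the box of exponents below `q` -/
def Bx (q : ℕ) : Finset ((ℕ × ℕ) × ℕ) := (range q ×ˢ range q) ×ˢ range q

/-- truncation of a power series to the box -/
noncomputable def boxSum (q : ℕ) (f : MvPowerSeries (Fin 3) F) : MvPowerSeries (Fin 3) F :=
  ∑ d ∈ Bx q, coeff (ex d.1.1 d.1.2 d.2) f • mon F d.1.1 d.1.2 d.2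

lemma m_eq_ex_iff (m : Fin 3 →₀ ℕ) (a b c : ℕ) :
    m = ex a b c ↔ ((a, b), c) = (((m 0, m 1), m 2) : (ℕ × ℕ) × ℕ) := by
  constructor
  · rintro rfl
    simp [ex_apply0, ex_apply1, ex_apply2]
  · intro h
    simp only [Prod.mk.injEq] at h
    obtain ⟨⟨h1, h2⟩, h3⟩ := h
    subst h1; subst h2; subst h3
    exact (ex_eta m).symm

lemma coeff_boxSum (q : ℕ) (f : MvPowerSeries (Fin 3) F) (m : Fin 3 →₀ ℕ) :
    coeff m (boxSum F q f) =
      if m 0 < q ∧ m 1 < q ∧ m 2 < q then coeff m f else 0 := by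
  rw [boxSum, map_sum]
  have hterm : ∀ d ∈ Bx q,
      coeff m (coeff (ex d.1.1 d.1.2 d.2) f • mon F d.1.1 d.1.2 d.2) =
        if d = (((m 0, m 1), m 2) : (ℕ × ℕ) × ℕ) then coeff (ex d.1.1 d.1.2 d.2) f
        else 0 := by
    intro d _
    rw [map_smul, mon, coeff_monomial, smul_eq_mul, mul_ite, mul_one, mul_zero]
    have hiff : (m = ex d.1.1 d.1.2 d.2) ↔ (d = (((m 0, m 1), m 2) : (ℕ × ℕ) × ℕ)) := by
      rw [m_eq_ex_iff]
    exact if_congr hiff rfl rfl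
  rw [Finset.sum_congr rfl hterm, Finset.sum_ite_eq' (Bx q)]
  have hmem : ((((m 0, m 1), m 2) : (ℕ × ℕ) × ℕ) ∈ Bx q) ↔
      (m 0 < q ∧ m 1 < q ∧ m 2 < q) := by
    simp [Bx, Finset.mem_product, and_assoc]
  refine if_congr hmem ?_ rfl
  dsimp only
  rw [ex_eta]

lemma sub_boxSum_mem (k q : ℕ) (f : MvPowerSeries (Fin 3) F) :
    f - boxSum F q f ∈ I F k q := by
  set g := f - boxSum F q f with hgdef
  have hcoeff : ∀ m : Fin 3 →₀ ℕ, m 0 < q → m 1 < q → m 2 < q → coeff m g = 0 := by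
    intro m h0 h1 h2
    rw [hgdef, map_sub, coeff_boxSum, if_pos ⟨h0, h1, h2⟩, sub_self]
  let p0 : MvPowerSeries (Fin 3) F := fun m => if q ≤ m 0 then coeff m g else 0
  let p1 : MvPowerSeries (Fin 3) F := fun m => if m 0 < q ∧ q ≤ m 1 then coeff m g else 0
  let p2 : MvPowerSeries (Fin 3) F :=
    fun m => if m 0 < q ∧ m 1 < q ∧ q ≤ m 2 then coeff m g else 0
  have hcp0 : ∀ m, coeff m p0 = if q ≤ m 0 then coeff m g else 0 := fun m => rfl
  have hcp1 : ∀ m, coeff m p1 = if m 0 < q ∧ q ≤ m 1 then coeff m g else 0 := fun m => rfl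
  have hcp2 : ∀ m, coeff m p2 =
      if m 0 < q ∧ m 1 < q ∧ q ≤ m 2 then coeff m g else 0 := fun m => rfl
  have hsum : g = p0 + (p1 + p2) := by
    ext m
    rw [map_add, map_add, hcp0, hcp1, hcp2]
    by_cases h0 : m 0 < q
    · by_cases h1 : m 1 < q
      · by_cases h2 : m 2 < q
        · rw [hcoeff m h0 h1 h2, if_neg (by omega), if_neg (by omega), if_neg (by omega)]
          ring
        · rw [if_neg (by omega), if_neg (by omega), if_pos ⟨h0, h1, by omega⟩]
          ring
      · rw [if_neg (by omega), if_pos ⟨h0, by omega⟩, if_neg (by omega)]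
        ring
    · rw [if_pos (by omega), if_neg (by omega), if_neg (by omega)]
      ring
  have hd0 : (X 0 : MvPowerSeries (Fin 3) F) ^ q ∣ p0 := by
    rw [X_pow_dvd_iff]
    intro m hm
    rw [hcp0, if_neg (by omega)]
  have hd1 : (X 1 : MvPowerSeries (Fin 3) F) ^ q ∣ p1 := by
    rw [X_pow_dvd_iff]
    intro m hm
    rw [hcp1, if_neg (by omega)]
  have hd2 : (X 2 : MvPowerSeries (Fin 3) F) ^ q ∣ p2 := by
    rw [X_pow_dvd_iff]
    intro m hm
    rw [hcp2, if_neg (by omega)]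
  obtain ⟨c0, hc0⟩ := hd0
  obtain ⟨c1, hc1⟩ := hd1
  obtain ⟨c2, hc2⟩ := hd2
  rw [hsum, hc0, hc1, hc2]
  exact add_mem (Ideal.mul_mem_right _ _ (Xpow_mem F k q 0))
    (add_mem (Ideal.mul_mem_right _ _ (Xpow_mem F k q 1))
      (Ideal.mul_mem_right _ _ (Xpow_mem F k q 2)))

lemma nf_mem_S_iff {k q : ℕ} (hk : 0 < k) (a b c : ℕ) :
    ((((a + c / k, b + c / k), c % k) : (ℕ × ℕ) × ℕ) ∈ S k q) ↔
      (a + c / k < q ∧ b + c / k < q ∧ min a b * k + c < q) := by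
  rw [mem_S_mk]
  have h1 : min (a + c / k) (b + c / k) = min a b + c / k := by omega
  have h2 : c / k * k + c % k = c := by
    rw [mul_comm]
    exact Nat.div_add_mod c k
  rw [h1, add_mul]
  constructor
  · rintro ⟨⟨x, y, -⟩, z⟩
    exact ⟨x, y, by omega⟩
  · rintro ⟨x, y, z⟩
    exact ⟨⟨x, y, Nat.mod_lt _ hk⟩, by omega⟩

lemma mk_smul {k q : ℕ} (c : F) (x : MvPowerSeries (Fin 3) F) :
    Ideal.Quotient.mk (I F k q) (c • x) = c • Ideal.Quotient.mk (I F k q) x := by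
  rw [← Ideal.Quotient.mkₐ_eq_mk F, map_smul]

lemma sum_phi_mon {k q : ℕ} (hk : 0 < k) (a b c : ℕ) :
    ∑ p ∈ (S k q).attach,
        phi F k q (mon F a b c) p •
          Ideal.Quotient.mk (I F k q)
            (mon F (p : (ℕ × ℕ) × ℕ).1.1 (p : (ℕ × ℕ) × ℕ).1.2 (p : (ℕ × ℕ) × ℕ).2) =
      Ideal.Quotient.mk (I F k q) (mon F a b c) := by
  have hterm : ∀ p ∈ (S k q).attach,
      phi F k q (mon F a b c) p •
          Ideal.Quotient.mk (I F k q)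
            (mon F (p : (ℕ × ℕ) × ℕ).1.1 (p : (ℕ × ℕ) × ℕ).1.2 (p : (ℕ × ℕ) × ℕ).2) =
        (fun d : (ℕ × ℕ) × ℕ =>
          if d = (((a + c / k, b + c / k), c % k) : (ℕ × ℕ) × ℕ) then
            Ideal.Quotient.mk (I F k q) (mon F d.1.1 d.1.2 d.2)
          else 0) (p : (ℕ × ℕ) × ℕ) := by
    intro p _
    dsimp only
    rw [phi_mon F hk, ite_smul, one_smul, zero_smul]
  rw [Finset.sum_congr rfl hterm, Finset.sum_attach (S k q)
    (fun d : (ℕ × ℕ) × ℕ =>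
      if d = (((a + c / k, b + c / k), c % k) : (ℕ × ℕ) × ℕ) then
        Ideal.Quotient.mk (I F k q) (mon F d.1.1 d.1.2 d.2)
      else 0), Finset.sum_ite_eq' (S k q), mk_normal F hk c a b]
  dsimp only
  exact if_congr (nf_mem_S_iff (q := q) hk a b c) rfl rfl

lemma repr_eq {k q : ℕ} (hk : 0 < k) (f : MvPowerSeries (Fin 3) F) :
    Ideal.Quotient.mk (I F k q) f =
      ∑ p ∈ (S k q).attach,
        phi F k q f p •
          Ideal.Quotient.mk (I F k q)
            (mon F (p : (ℕ × ℕ) × ℕ).1.1 (p : (ℕ × ℕ) × ℕ).1.2 (p : (ℕ × ℕ) × ℕ).2) := by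
  have h1 : Ideal.Quotient.mk (I F k q) f = Ideal.Quotient.mk (I F k q) (boxSum F q f) := by
    rw [Ideal.Quotient.eq]
    exact sub_boxSum_mem F k q f
  have h2 : phi F k q f = phi F k q (boxSum F q f) := by
    have h3 := phi_I hk (sub_boxSum_mem F k q f)
    rw [map_sub] at h3
    exact sub_eq_zero.mp h3
  rw [h1, h2, boxSum, map_sum]
  calc
    ∑ d ∈ Bx q, Ideal.Quotient.mk (I F k q) (coeff (ex d.1.1 d.1.2 d.2) f • mon F d.1.1 d.1.2 d.2) =
        ∑ d ∈ Bx q, coeff (ex d.1.1 d.1.2 d.2) f •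
          Ideal.Quotient.mk (I F k q) (mon F d.1.1 d.1.2 d.2) :=
      Finset.sum_congr rfl fun d _ => mk_smul F _ _
    _ = ∑ d ∈ Bx q, coeff (ex d.1.1 d.1.2 d.2) f •
          ∑ p ∈ (S k q).attach,
            phi F k q (mon F d.1.1 d.1.2 d.2) p •
              Ideal.Quotient.mk (I F k q)
                (mon F (p : (ℕ × ℕ) × ℕ).1.1 (p : (ℕ × ℕ) × ℕ).1.2 (p : (ℕ × ℕ) × ℕ).2) :=
      Finset.sum_congr rfl fun d _ => by rw [sum_phi_mon F hk]
    _ = ∑ d ∈ Bx q, ∑ p ∈ (S k q).attach,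
          (coeff (ex d.1.1 d.1.2 d.2) f * phi F k q (mon F d.1.1 d.1.2 d.2) p) •
            Ideal.Quotient.mk (I F k q)
              (mon F (p : (ℕ × ℕ) × ℕ).1.1 (p : (ℕ × ℕ) × ℕ).1.2 (p : (ℕ × ℕ) × ℕ).2) := by
      refine Finset.sum_congr rfl fun d _ => ?_
      rw [Finset.smul_sum]
      exact Finset.sum_congr rfl fun p _ => (mul_smul _ _ _).symm
    _ = ∑ p ∈ (S k q).attach, ∑ d ∈ Bx q,
          (coeff (ex d.1.1 d.1.2 d.2) f * phi F k q (mon F d.1.1 d.1.2 d.2) p) •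
            Ideal.Quotient.mk (I F k q)
              (mon F (p : (ℕ × ℕ) × ℕ).1.1 (p : (ℕ × ℕ) × ℕ).1.2 (p : (ℕ × ℕ) × ℕ).2) :=
      Finset.sum_comm
    _ = ∑ p ∈ (S k q).attach,
          phi F k q (∑ d ∈ Bx q, coeff (ex d.1.1 d.1.2 d.2) f • mon F d.1.1 d.1.2 d.2) p •
            Ideal.Quotient.mk (I F k q)
              (mon F (p : (ℕ × ℕ) × ℕ).1.1 (p : (ℕ × ℕ) × ℕ).1.2 (p : (ℕ × ℕ) × ℕ).2) := by
      refine Finset.sum_congr rfl fun p _ => ?_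
      rw [← Finset.sum_smul]
      congr 1
      rw [map_sum, Finset.sum_apply]
      exact Finset.sum_congr rfl fun d _ => by rw [map_smul]; rfl

/-- the basis of the quotient ring given by standard monomials -/
noncomputable def bas (k q : ℕ) (hk : 0 < k) :
    Module.Basis ↥(S k q) F (MvPowerSeries (Fin 3) F ⧸ I F k q) := by
  refine Module.Basis.mk (v := fun p : ↥(S k q) =>
    Ideal.Quotient.mk (I F k q)
      (mon F (p : (ℕ × ℕ) × ℕ).1.1 (p : (ℕ × ℕ) × ℕ).1.2 (p : (ℕ × ℕ) × ℕ).2)) ?_ ?_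
  · rw [Fintype.linearIndependent_iff]
    intro g hg p0
    have hG : Ideal.Quotient.mk (I F k q)
        (∑ p : ↥(S k q), g p •
          mon F (p : (ℕ × ℕ) × ℕ).1.1 (p : (ℕ × ℕ) × ℕ).1.2 (p : (ℕ × ℕ) × ℕ).2) = 0 := by
      rw [map_sum, Finset.sum_congr rfl fun p _ => mk_smul F _ _]
      exact hg
    have hGI := (Ideal.Quotient.eq_zero_iff_mem).mp hG
    have hphi := congrFun (phi_I hk hGI) p0
    rw [map_sum, Finset.sum_apply] at hphi
    have hnf : ∀ p : ↥(S k q),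
        ((((p : (ℕ × ℕ) × ℕ).1.1 + (p : (ℕ × ℕ) × ℕ).2 / k,
            (p : (ℕ × ℕ) × ℕ).1.2 + (p : (ℕ × ℕ) × ℕ).2 / k),
          (p : (ℕ × ℕ) × ℕ).2 % k) : (ℕ × ℕ) × ℕ) = (p : (ℕ × ℕ) × ℕ) := by
      intro p
      obtain ⟨⟨⟨A, B⟩, T⟩, hp⟩ := p
      obtain ⟨⟨-, -, hT⟩, -⟩ := mem_S_mk.mp hp
      simp only [Prod.mk.injEq]
      refine ⟨⟨by rw [Nat.div_eq_of_lt hT, add_zero], by rw [Nat.div_eq_of_lt hT, add_zero]⟩,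
        by rw [Nat.mod_eq_of_lt hT]⟩
    simp only [map_smul, Pi.smul_apply, smul_eq_mul, phi_mon F hk, hnf, mul_ite, mul_one,
      mul_zero, Subtype.coe_inj] at hphi
    rw [Finset.sum_ite_eq] at hphi
    simpa using hphi
  · intro x _
    obtain ⟨f, rfl⟩ := Ideal.Quotient.mk_surjective x
    rw [repr_eq F hk f]
    apply Submodule.sum_mem
    intro p _
    exact Submodule.smul_mem _ _ (Submodule.subset_span ⟨p, rfl⟩)

lemma count_min (q k c T : ℕ) (hTq : T ≤ q) (hT : ∀ j, j * k + c < q ↔ j < T) :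
    (((range q) ×ˢ (range q)).filter fun p : ℕ × ℕ => min p.1 p.2 * k + c < q).card =
      q * q - (q - T) * (q - T) := by
  have hcond : ∀ p : ℕ × ℕ, (min p.1 p.2 * k + c < q) ↔ (p.1 < T ∨ p.2 < T) := by
    intro p
    rw [hT, min_lt_iff]
  have hfilter : ((range q ×ˢ range q).filter fun p : ℕ × ℕ => min p.1 p.2 * k + c < q) =
      ((range q ×ˢ range q).filter fun p : ℕ × ℕ => p.1 < T ∨ p.2 < T) :=
    Finset.filter_congr fun p _ => hcond p
  rw [hfilter, Finset.filter_or]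
  have hA : (range q ×ˢ range q).filter (fun p : ℕ × ℕ => p.1 < T) = range T ×ˢ range q := by
    ext ⟨a, b⟩
    simp only [Finset.mem_filter, Finset.mem_product, Finset.mem_range]
    omega
  have hB : (range q ×ˢ range q).filter (fun p : ℕ × ℕ => p.2 < T) = range q ×ˢ range T := by
    ext ⟨a, b⟩
    simp only [Finset.mem_filter, Finset.mem_product, Finset.mem_range]
    omega
  have hAB : (range T ×ˢ range q) ∩ (range q ×ˢ range T) = range T ×ˢ range T := by
    ext ⟨a, b⟩
    simp only [Finset.mem_inter, Finset.mem_product, Finset.mem_range]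
    omega
  rw [hA, hB]
  have hcard := Finset.card_union_add_card_inter (range T ×ˢ range q) (range q ×ˢ range T)
  rw [hAB, Finset.card_product, Finset.card_product, Finset.card_product, Finset.card_range,
    Finset.card_range] at hcard
  obtain ⟨d, rfl⟩ : ∃ d, q = T + d := ⟨q - T, by omega⟩
  have h4 : T * (T + d) + (T + d) * T = (T * T + 2 * (T * d)) + T * T := by ring
  rw [h4] at hcard
  have h2 := Nat.add_right_cancel hcard
  rw [h2, show (T + d) - T = d from by omega,
    show (T + d) * (T + d) = (T * T + 2 * (T * d)) + d * d from by ring, Nat.add_sub_cancel]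

lemma card_S_sum (k q : ℕ) :
    (S k q).card = ∑ c ∈ range k, ((range q ×ˢ range q).filter
      fun p : ℕ × ℕ => min p.1 p.2 * k + c < q).card := by
  rw [S, Finset.card_filter, Finset.sum_product, Finset.sum_comm]
  apply Finset.sum_congr rfl
  intro c _
  rw [Finset.card_filter]

lemma card3_1 (M : ℕ) : (S 3 (3 * M + 1)).card = 15 * M * M + 10 * M + 1 := by
  rw [card_S_sum, Finset.sum_range_succ,
    Finset.sum_range_succ,
    Finset.sum_range_succ,
    Finset.sum_range_zero,
    count_min (3 * M + 1) 3 0 (M + 1) (by omega) (fun j => by omega),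
    count_min (3 * M + 1) 3 1 (M) (by omega) (fun j => by omega),
    count_min (3 * M + 1) 3 2 (M) (by omega) (fun j => by omega)]
  have e1 : (3 * M + 1) * (3 * M + 1) - (3 * M + 1 - (M + 1)) * (3 * M + 1 - (M + 1)) = 5 * M * M + 6 * M + 1 := by
    rw [show 3 * M + 1 - (M + 1) = 2 * M from by omega,
      show (3 * M + 1) * (3 * M + 1) = (2 * M) * (2 * M) + (5 * M * M + 6 * M + 1) from by ring,
      Nat.add_sub_cancel_left]
  have e2 : (3 * M + 1) * (3 * M + 1) - (3 * M + 1 - M) * (3 * M + 1 - M) = 5 * M * M + 2 * M := by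
    rw [show 3 * M + 1 - M = 2 * M + 1 from by omega,
      show (3 * M + 1) * (3 * M + 1) = (2 * M + 1) * (2 * M + 1) + (5 * M * M + 2 * M) from by ring,
      Nat.add_sub_cancel_left]
  rw [e1, e2]
  ring

lemma card3_2 (M : ℕ) : (S 3 (3 * M + 2)).card = 15 * M * M + 20 * M + 6 := by
  rw [card_S_sum, Finset.sum_range_succ,
    Finset.sum_range_succ,
    Finset.sum_range_succ,
    Finset.sum_range_zero,
    count_min (3 * M + 2) 3 0 (M + 1) (by omega) (fun j => by omega),
    count_min (3 * M + 2) 3 1 (M + 1) (by omega) (fun j => by omega),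
    count_min (3 * M + 2) 3 2 (M) (by omega) (fun j => by omega)]
  have e1 : (3 * M + 2) * (3 * M + 2) - (3 * M + 2 - (M + 1)) * (3 * M + 2 - (M + 1)) = 5 * M * M + 8 * M + 3 := by
    rw [show 3 * M + 2 - (M + 1) = 2 * M + 1 from by omega,
      show (3 * M + 2) * (3 * M + 2) = (2 * M + 1) * (2 * M + 1) + (5 * M * M + 8 * M + 3) from by ring,
      Nat.add_sub_cancel_left]
  have e2 : (3 * M + 2) * (3 * M + 2) - (3 * M + 2 - M) * (3 * M + 2 - M) = 5 * M * M + 4 * M := by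
    rw [show 3 * M + 2 - M = 2 * M + 2 from by omega,
      show (3 * M + 2) * (3 * M + 2) = (2 * M + 2) * (2 * M + 2) + (5 * M * M + 4 * M) from by ring,
      Nat.add_sub_cancel_left]
  rw [e1, e2]
  ring

lemma card5_1 (M : ℕ) : (S 5 (5 * M + 1)).card = 45 * M * M + 18 * M + 1 := by
  rw [card_S_sum, Finset.sum_range_succ,
    Finset.sum_range_succ,
    Finset.sum_range_succ,
    Finset.sum_range_succ,
    Finset.sum_range_succ,
    Finset.sum_range_zero,
    count_min (5 * M + 1) 5 0 (M + 1) (by omega) (fun j => by omega),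
    count_min (5 * M + 1) 5 1 (M) (by omega) (fun j => by omega),
    count_min (5 * M + 1) 5 2 (M) (by omega) (fun j => by omega),
    count_min (5 * M + 1) 5 3 (M) (by omega) (fun j => by omega),
    count_min (5 * M + 1) 5 4 (M) (by omega) (fun j => by omega)]
  have e1 : (5 * M + 1) * (5 * M + 1) - (5 * M + 1 - (M + 1)) * (5 * M + 1 - (M + 1)) = 9 * M * M + 10 * M + 1 := by
    rw [show 5 * M + 1 - (M + 1) = 4 * M from by omega,
      show (5 * M + 1) * (5 * M + 1) = (4 * M) * (4 * M) + (9 * M * M + 10 * M + 1) from by ring,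
      Nat.add_sub_cancel_left]
  have e2 : (5 * M + 1) * (5 * M + 1) - (5 * M + 1 - M) * (5 * M + 1 - M) = 9 * M * M + 2 * M := by
    rw [show 5 * M + 1 - M = 4 * M + 1 from by omega,
      show (5 * M + 1) * (5 * M + 1) = (4 * M + 1) * (4 * M + 1) + (9 * M * M + 2 * M) from by ring,
      Nat.add_sub_cancel_left]
  rw [e1, e2]
  ring

lemma card5_2 (M : ℕ) : (S 5 (5 * M + 2)).card = 45 * M * M + 36 * M + 6 := by
  rw [card_S_sum, Finset.sum_range_succ,
    Finset.sum_range_succ,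
    Finset.sum_range_succ,
    Finset.sum_range_succ,
    Finset.sum_range_succ,
    Finset.sum_range_zero,
    count_min (5 * M + 2) 5 0 (M + 1) (by omega) (fun j => by omega),
    count_min (5 * M + 2) 5 1 (M + 1) (by omega) (fun j => by omega),
    count_min (5 * M + 2) 5 2 (M) (by omega) (fun j => by omega),
    count_min (5 * M + 2) 5 3 (M) (by omega) (fun j => by omega),
    count_min (5 * M + 2) 5 4 (M) (by omega) (fun j => by omega)]
  have e1 : (5 * M + 2) * (5 * M + 2) - (5 * M + 2 - (M + 1)) * (5 * M + 2 - (M + 1)) = 9 * M * M + 12 * M + 3 := by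
    rw [show 5 * M + 2 - (M + 1) = 4 * M + 1 from by omega,
      show (5 * M + 2) * (5 * M + 2) = (4 * M + 1) * (4 * M + 1) + (9 * M * M + 12 * M + 3) from by ring,
      Nat.add_sub_cancel_left]
  have e2 : (5 * M + 2) * (5 * M + 2) - (5 * M + 2 - M) * (5 * M + 2 - M) = 9 * M * M + 4 * M := by
    rw [show 5 * M + 2 - M = 4 * M + 2 from by omega,
      show (5 * M + 2) * (5 * M + 2) = (4 * M + 2) * (4 * M + 2) + (9 * M * M + 4 * M) from by ring,
      Nat.add_sub_cancel_left]
  rw [e1, e2]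
  ring

lemma card5_3 (M : ℕ) : (S 5 (5 * M + 3)).card = 45 * M * M + 54 * M + 15 := by
  rw [card_S_sum, Finset.sum_range_succ,
    Finset.sum_range_succ,
    Finset.sum_range_succ,
    Finset.sum_range_succ,
    Finset.sum_range_succ,
    Finset.sum_range_zero,
    count_min (5 * M + 3) 5 0 (M + 1) (by omega) (fun j => by omega),
    count_min (5 * M + 3) 5 1 (M + 1) (by omega) (fun j => by omega),
    count_min (5 * M + 3) 5 2 (M + 1) (by omega) (fun j => by omega),
    count_min (5 * M + 3) 5 3 (M) (by omega) (fun j => by omega),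
    count_min (5 * M + 3) 5 4 (M) (by omega) (fun j => by omega)]
  have e1 : (5 * M + 3) * (5 * M + 3) - (5 * M + 3 - (M + 1)) * (5 * M + 3 - (M + 1)) = 9 * M * M + 14 * M + 5 := by
    rw [show 5 * M + 3 - (M + 1) = 4 * M + 2 from by omega,
      show (5 * M + 3) * (5 * M + 3) = (4 * M + 2) * (4 * M + 2) + (9 * M * M + 14 * M + 5) from by ring,
      Nat.add_sub_cancel_left]
  have e2 : (5 * M + 3) * (5 * M + 3) - (5 * M + 3 - M) * (5 * M + 3 - M) = 9 * M * M + 6 * M := by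
    rw [show 5 * M + 3 - M = 4 * M + 3 from by omega,
      show (5 * M + 3) * (5 * M + 3) = (4 * M + 3) * (4 * M + 3) + (9 * M * M + 6 * M) from by ring,
      Nat.add_sub_cancel_left]
  rw [e1, e2]
  ring

lemma card5_4 (M : ℕ) : (S 5 (5 * M + 4)).card = 45 * M * M + 72 * M + 28 := by
  rw [card_S_sum, Finset.sum_range_succ,
    Finset.sum_range_succ,
    Finset.sum_range_succ,
    Finset.sum_range_succ,
    Finset.sum_range_succ,
    Finset.sum_range_zero,
    count_min (5 * M + 4) 5 0 (M + 1) (by omega) (fun j => by omega),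
    count_min (5 * M + 4) 5 1 (M + 1) (by omega) (fun j => by omega),
    count_min (5 * M + 4) 5 2 (M + 1) (by omega) (fun j => by omega),
    count_min (5 * M + 4) 5 3 (M + 1) (by omega) (fun j => by omega),
    count_min (5 * M + 4) 5 4 (M) (by omega) (fun j => by omega)]
  have e1 : (5 * M + 4) * (5 * M + 4) - (5 * M + 4 - (M + 1)) * (5 * M + 4 - (M + 1)) = 9 * M * M + 16 * M + 7 := by
    rw [show 5 * M + 4 - (M + 1) = 4 * M + 3 from by omega,
      show (5 * M + 4) * (5 * M + 4) = (4 * M + 3) * (4 * M + 3) + (9 * M * M + 16 * M + 7) from by ring,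
      Nat.add_sub_cancel_left]
  have e2 : (5 * M + 4) * (5 * M + 4) - (5 * M + 4 - M) * (5 * M + 4 - M) = 9 * M * M + 8 * M := by
    rw [show 5 * M + 4 - M = 4 * M + 4 from by omega,
      show (5 * M + 4) * (5 * M + 4) = (4 * M + 4) * (4 * M + 4) + (9 * M * M + 8 * M) from by ring,
      Nat.add_sub_cancel_left]
  rw [e1, e2]
  ring

lemma pow2_mod3 (m : ℕ) : 2 ^ m % 3 = if m % 2 = 0 then 1 else 2 := by
  induction m with
  | zero => norm_num
  | succ m ih =>
    rw [pow_succ, Nat.mul_mod, ih]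
    split_ifs <;> omega

lemma pow2_mod5 (m : ℕ) :
    2 ^ m % 5 = if m % 4 = 0 then 1 else if m % 4 = 1 then 2 else if m % 4 = 2 then 4 else 3 := by
  induction m with
  | zero => norm_num
  | succ m ih =>
    rw [pow_succ, Nat.mul_mod, ih]
    split_ifs <;> omega

lemma D3 (m : ℕ) : ((S 3 (2 ^ (m + 1))).card : ℤ) - 4 * ((S 3 (2 ^ m)).card : ℤ) = 2 := by
  have h3 := pow2_mod3 m
  have hdm := Nat.div_add_mod (2 ^ m) 3
  set M := 2 ^ m / 3 with hM
  have hpow : 2 ^ (m + 1) = 2 * 2 ^ m := by rw [pow_succ]; ring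
  by_cases hpar : m % 2 = 0
  · rw [if_pos hpar] at h3
    have h1 : 2 ^ m = 3 * M + 1 := by omega
    have h2 : 2 ^ (m + 1) = 3 * (2 * M) + 2 := by omega
    rw [h1, h2, card3_2, card3_1]
    push_cast
    ring
  · rw [if_neg hpar] at h3
    have h1 : 2 ^ m = 3 * M + 2 := by omega
    have h2 : 2 ^ (m + 1) = 3 * (2 * M + 1) + 1 := by omega
    rw [h1, h2, card3_1, card3_2]
    push_cast
    ring

lemma D5 (m : ℕ) : ((S 5 (2 ^ (m + 1))).card : ℤ) - 4 * ((S 5 (2 ^ m)).card : ℤ) =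
    if (m + 1) % 2 = 0 then 4 else 2 := by
  have h5 := pow2_mod5 m
  have hdm := Nat.div_add_mod (2 ^ m) 5
  set M := 2 ^ m / 5 with hM
  have hpow : 2 ^ (m + 1) = 2 * 2 ^ m := by rw [pow_succ]; ring
  have h4 : m % 4 = 0 ∨ m % 4 = 1 ∨ m % 4 = 2 ∨ m % 4 = 3 := by omega
  rcases h4 with h | h | h | h
  · rw [if_pos h] at h5
    have h1 : 2 ^ m = 5 * M + 1 := by omega
    have h2 : 2 ^ (m + 1) = 5 * (2 * M) + 2 := by omega
    rw [h1, h2, card5_2, card5_1, if_neg (by omega)]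
    push_cast
    ring
  · rw [if_neg (by omega), if_pos h] at h5
    have h1 : 2 ^ m = 5 * M + 2 := by omega
    have h2 : 2 ^ (m + 1) = 5 * (2 * M) + 4 := by omega
    rw [h1, h2, card5_4, card5_2, if_pos (by omega)]
    push_cast
    ring
  · rw [if_neg (by omega), if_neg (by omega), if_pos h] at h5
    have h1 : 2 ^ m = 5 * M + 4 := by omega
    have h2 : 2 ^ (m + 1) = 5 * (2 * M + 1) + 3 := by omega
    rw [h1, h2, card5_3, card5_4, if_neg (by omega)]
    push_cast
    ring
  · rw [if_neg (by omega), if_neg (by omega), if_neg (by omega)] at h5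
    have h1 : 2 ^ m = 5 * M + 3 := by omega
    have h2 : 2 ^ (m + 1) = 5 * (2 * M + 1) + 1 := by omega
    rw [h1, h2, card5_1, card5_3, if_pos (by omega)]
    push_cast
    ring

end HKaux

theorem hkDim_eq_card (F : Type) [Field F] [CharP F 2] (k q : ℕ) (hk : 0 < k) :
    hkDim F (Fin 3) (MvPowerSeries.X 0 * MvPowerSeries.X 1 + MvPowerSeries.X 2 ^ k) q =
      (HKaux.S k q).card := by
  have h : hkDim F (Fin 3) (MvPowerSeries.X 0 * MvPowerSeries.X 1 + MvPowerSeries.X 2 ^ k) q =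
      Module.finrank F (MvPowerSeries (Fin 3) F ⧸ HKaux.I F k q) := rfl
  rw [h, Module.finrank_eq_card_basis (HKaux.bas F k q hk), Fintype.card_coe]

/-- Lemma 1.9(a) of the paper, coefficientwise: for `char F = 2` and
`e_n(uv + x^k) = dim_F F[[u,v,x]]/(uv + x^k, u^q, v^q, x^q)` with `q = 2^n`, one has,
for every `n ≥ 1`,
`(e_n(uv+x⁵) - 4e_(n-1)(uv+x⁵)) - (e_n(uv+x³) - 4e_(n-1)(uv+x³)) = 2` if `n` is even,
and `= 0` if `n` is odd. -/
theorem stmt5 (F : Type) [Field F] [CharP F 2] (n : ℕ) (hn : 1 ≤ n) :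
    ((hkDim F (Fin 3)
          (MvPowerSeries.X 0 * MvPowerSeries.X 1 + MvPowerSeries.X 2 ^ 5) (2 ^ n) : ℤ)
        - 4 * hkDim F (Fin 3)
          (MvPowerSeries.X 0 * MvPowerSeries.X 1 + MvPowerSeries.X 2 ^ 5) (2 ^ (n - 1)))
      - ((hkDim F (Fin 3)
          (MvPowerSeries.X 0 * MvPowerSeries.X 1 + MvPowerSeries.X 2 ^ 3) (2 ^ n) : ℤ)
        - 4 * hkDim F (Fin 3)
          (MvPowerSeries.X 0 * MvPowerSeries.X 1 + MvPowerSeries.X 2 ^ 3) (2 ^ (n - 1)))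
      = if Even n then 2 else 0 := by
  obtain ⟨m, rfl⟩ : ∃ m, n = m + 1 := ⟨n - 1, by omega⟩
  simp only [Nat.add_sub_cancel]
  rw [hkDim_eq_card F 5 (2 ^ (m + 1)) (by norm_num),
    hkDim_eq_card F 5 (2 ^ m) (by norm_num),
    hkDim_eq_card F 3 (2 ^ (m + 1)) (by norm_num),
    hkDim_eq_card F 3 (2 ^ m) (by norm_num),
    HKaux.D5 m, HKaux.D3 m]
  by_cases hev : Even (m + 1)
  · rw [if_pos hev, if_pos (Nat.even_iff.mp hev)]
    norm_num
  · rw [if_neg hev, if_neg (fun h => hev (Nat.even_iff.mpr h))]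
    norm_num
end

section
/- Let F be a field of characteristic 2 and for k = 3, 5 let e_n(uv + x^k) denote the F-dimension of F[[u,v,x]]/(uv + x^k, u^q, v^q, x^q) with q = 2^n. Then for every n ≥ 1, 2( e_n(uv+x^3) − 4 e_{n−1}(uv+x^3) ) − ( e_n(uv+x^5) − 4 e_{n−1}(uv+x^5) ) equals 2 if n is odd and 0 if n is even; moreover for n = 0 the corresponding constant terms satisfy 2·e_0(uv+x^3) − e_0(uv+x^5) = 1. -/
open scoped Classical

open MvPowerSeries Finset

namespace HKaux

variable (F : Type) [Field F]

abbrev Tri (q : ℕ) := Fin q × Fin q × Fin q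

variable (k q : ℕ)

noncomputable def emb (p : Tri q) : Fin 3 →₀ ℕ :=
  Finsupp.equivFunOnFinite.symm ![(p.1 : ℕ), (p.2.1 : ℕ), (p.2.2 : ℕ)]

@[simp] lemma emb_0 (p : Tri q) : emb q p 0 = (p.1 : ℕ) := by
  simp [emb]
@[simp] lemma emb_1 (p : Tri q) : emb q p 1 = (p.2.1 : ℕ) := by
  simp [emb]
@[simp] lemma emb_2 (p : Tri q) : emb q p 2 = (p.2.2 : ℕ) := by
  simp [emb]

noncomputable def piq : MvPowerSeries (Fin 3) F →ₗ[F] (Tri q → F) :=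
  LinearMap.pi fun p => MvPowerSeries.coeff (R := F) (emb q p)

@[simp] lemma piq_apply (s : MvPowerSeries (Fin 3) F) (p : Tri q) :
    piq F q s p = MvPowerSeries.coeff (R := F) (emb q p) s := rfl

noncomputable def liftv : (Tri q → F) →ₗ[F] MvPowerSeries (Fin 3) F where
  toFun v := fun d =>
    if h : d 0 < q ∧ d 1 < q ∧ d 2 < q then v (⟨d 0, h.1⟩, ⟨d 1, h.2.1⟩, ⟨d 2, h.2.2⟩) else 0
  map_add' u v := by
    ext d
    change (if h : d 0 < q ∧ d 1 < q ∧ d 2 < q then (u + v) (⟨d 0, h.1⟩, ⟨d 1, h.2.1⟩, ⟨d 2, h.2.2⟩) else (0 : F))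
      = (if h : d 0 < q ∧ d 1 < q ∧ d 2 < q then u (⟨d 0, h.1⟩, ⟨d 1, h.2.1⟩, ⟨d 2, h.2.2⟩) else 0)
        + (if h : d 0 < q ∧ d 1 < q ∧ d 2 < q then v (⟨d 0, h.1⟩, ⟨d 1, h.2.1⟩, ⟨d 2, h.2.2⟩) else 0)
    split <;> simp
  map_smul' a v := by
    ext d
    change (if h : d 0 < q ∧ d 1 < q ∧ d 2 < q then (a • v) (⟨d 0, h.1⟩, ⟨d 1, h.2.1⟩, ⟨d 2, h.2.2⟩) else (0 : F))
      = a • (if h : d 0 < q ∧ d 1 < q ∧ d 2 < q then v (⟨d 0, h.1⟩, ⟨d 1, h.2.1⟩, ⟨d 2, h.2.2⟩) else (0 : F))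
    split <;> simp

lemma coeff_liftv (v : Tri q → F) (d : Fin 3 →₀ ℕ) :
    MvPowerSeries.coeff (R := F) d (liftv F q v) =
      if h : d 0 < q ∧ d 1 < q ∧ d 2 < q then v (⟨d 0, h.1⟩, ⟨d 1, h.2.1⟩, ⟨d 2, h.2.2⟩)
      else 0 := rfl

lemma piq_liftv (v : Tri q → F) : piq F q (liftv F q v) = v := by
  funext p
  rw [piq_apply, coeff_liftv]
  have h : emb q p 0 < q ∧ emb q p 1 < q ∧ emb q p 2 < q := by
    refine ⟨?_, ?_, ?_⟩ <;> simp
  rw [dif_pos h]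
  congr 1

noncomputable def Jdl : Ideal (MvPowerSeries (Fin 3) F) :=
  Ideal.span (Set.range fun i : Fin 3 => (X i : MvPowerSeries (Fin 3) F) ^ q)

lemma piq_mul_gen (r : MvPowerSeries (Fin 3) F) (i : Fin 3) :
    piq F q (r * (X i) ^ q) = 0 := by
  funext p
  simp only [piq_apply, Pi.zero_apply]
  rw [X_pow_eq, coeff_mul_monomial, if_neg]
  intro hc
  have h2 := Finsupp.single_le_iff.mp hc
  have h3 : emb q p i < q := by fin_cases i <;> simp
  omega

lemma piq_eq_zero_of_mem (s : MvPowerSeries (Fin 3) F) (hs : s ∈ Jdl F q) :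
    piq F q s = 0 := by
  have H : ∀ x, x ∈ Jdl F q → ∀ r : MvPowerSeries (Fin 3) F, piq F q (r * x) = 0 := by
    intro x hx
    refine Submodule.span_induction ?_ ?_ ?_ ?_ hx
    · rintro _ ⟨i, rfl⟩ r; exact piq_mul_gen F q r i
    · intro r; rw [mul_zero, map_zero]
    · intro x y _ _ hx hy r; rw [mul_add, map_add, hx, hy, add_zero]
    · intro a x _ hx r
      rw [smul_eq_mul, ← mul_assoc, hx]
  simpa using H s hs 1

lemma mem_J (t : MvPowerSeries (Fin 3) F)
    (h : ∀ d : Fin 3 →₀ ℕ, d 0 < q → d 1 < q → d 2 < q → MvPowerSeries.coeff (R := F) d t = 0) :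
    t ∈ Jdl F q := by
  set c0 : MvPowerSeries (Fin 3) F :=
    fun d => MvPowerSeries.coeff (R := F) (d + Finsupp.single 0 q) t with hc0
  set c1 : MvPowerSeries (Fin 3) F :=
    fun d => if d 0 < q then MvPowerSeries.coeff (R := F) (d + Finsupp.single 1 q) t else 0 with hc1
  set c2 : MvPowerSeries (Fin 3) F :=
    fun d => if d 0 < q ∧ d 1 < q then MvPowerSeries.coeff (R := F) (d + Finsupp.single 2 q) t else 0
    with hc2
  have e0 : ∀ d : Fin 3 →₀ ℕ, MvPowerSeries.coeff (R := F) d ((X 0)^q * c0) =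
      if q ≤ d 0 then MvPowerSeries.coeff (R := F) d t else 0 := by
    intro d
    rw [X_pow_eq, coeff_monomial_mul]
    by_cases hd : q ≤ d 0
    · rw [if_pos (Finsupp.single_le_iff.mpr hd), if_pos hd, one_mul,
        MvPowerSeries.coeff_apply, hc0]
      dsimp only
      rw [tsub_add_cancel_of_le (Finsupp.single_le_iff.mpr hd)]
    · rw [if_neg (fun hc => hd (Finsupp.single_le_iff.mp hc)), if_neg hd]
  have e1 : ∀ d : Fin 3 →₀ ℕ, MvPowerSeries.coeff (R := F) d ((X 1)^q * c1) =
      if q ≤ d 1 ∧ d 0 < q then MvPowerSeries.coeff (R := F) d t else 0 := by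
    intro d
    rw [X_pow_eq, coeff_monomial_mul]
    by_cases hd : q ≤ d 1
    · rw [if_pos (Finsupp.single_le_iff.mpr hd), one_mul, MvPowerSeries.coeff_apply, hc1]
      dsimp only
      have hd0 : (d - Finsupp.single 1 q : Fin 3 →₀ ℕ) 0 = d 0 := by
        simp [Finsupp.tsub_apply, Finsupp.single_apply]
      rw [hd0, tsub_add_cancel_of_le (Finsupp.single_le_iff.mpr hd)]
      by_cases hd' : d 0 < q
      · rw [if_pos hd', if_pos ⟨hd, hd'⟩]
      · rw [if_neg hd', if_neg (fun hc => hd' hc.2)]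
    · rw [if_neg (fun hc => hd (Finsupp.single_le_iff.mp hc)), if_neg (fun hc => hd hc.1)]
  have e2 : ∀ d : Fin 3 →₀ ℕ, MvPowerSeries.coeff (R := F) d ((X 2)^q * c2) =
      if q ≤ d 2 ∧ d 0 < q ∧ d 1 < q then MvPowerSeries.coeff (R := F) d t else 0 := by
    intro d
    rw [X_pow_eq, coeff_monomial_mul]
    by_cases hd : q ≤ d 2
    · rw [if_pos (Finsupp.single_le_iff.mpr hd), one_mul, MvPowerSeries.coeff_apply, hc2]
      dsimp only
      have hd0 : (d - Finsupp.single 2 q : Fin 3 →₀ ℕ) 0 = d 0 := by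
        simp [Finsupp.tsub_apply, Finsupp.single_apply]
      have hd1 : (d - Finsupp.single 2 q : Fin 3 →₀ ℕ) 1 = d 1 := by
        simp [Finsupp.tsub_apply, Finsupp.single_apply]
      rw [hd0, hd1, tsub_add_cancel_of_le (Finsupp.single_le_iff.mpr hd)]
      by_cases hd' : d 0 < q ∧ d 1 < q
      · rw [if_pos hd', if_pos ⟨hd, hd'⟩]
      · rw [if_neg hd', if_neg (fun hc => hd' hc.2)]
    · rw [if_neg (fun hc => hd (Finsupp.single_le_iff.mp hc)), if_neg (fun hc => hd hc.1)]
  have key : t = (X 0)^q * c0 + (X 1)^q * c1 + (X 2)^q * c2 := by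
    ext d
    rw [map_add, map_add, e0 d, e1 d, e2 d]
    by_cases h0 : q ≤ d 0 <;> by_cases h1 : q ≤ d 1 <;> by_cases h2 : q ≤ d 2 <;>
      split_ifs <;>
      first
        | omega
        | simpa using h d (by omega) (by omega) (by omega)
        | simp
  rw [key]
  have hg : ∀ i : Fin 3, (X i : MvPowerSeries (Fin 3) F)^q ∈ Jdl F q :=
    fun i => Ideal.subset_span ⟨i, rfl⟩
  exact add_mem (add_mem (Ideal.mul_mem_right _ _ (hg 0)) (Ideal.mul_mem_right _ _ (hg 1)))
    (Ideal.mul_mem_right _ _ (hg 2))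

lemma sub_liftv_mem (s : MvPowerSeries (Fin 3) F) :
    s - liftv F q (piq F q s) ∈ Jdl F q := by
  apply mem_J
  intro d h0 h1 h2
  rw [map_sub, coeff_liftv, dif_pos ⟨h0, h1, h2⟩, piq_apply]
  have he : emb q (⟨d 0, h0⟩, ⟨d 1, h1⟩, ⟨d 2, h2⟩) = d := by
    apply Finsupp.ext; intro i; fin_cases i <;> simp
  rw [he, sub_self]

noncomputable def ff : MvPowerSeries (Fin 3) F := X 0 * X 1 + X 2 ^ k

noncomputable def Phi : (Tri q → F) →ₗ[F] (Tri q → F) :=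
  (piq F q) ∘ₗ (LinearMap.mulLeft F (ff F k)) ∘ₗ (liftv F q)

lemma Phi_def (v : Tri q → F) : Phi F k q v = piq F q (ff F k * liftv F q v) := rfl

noncomputable def Idl : Ideal (MvPowerSeries (Fin 3) F) :=
  Ideal.span ({ff F k} ∪ Set.range fun i : Fin 3 => (X i : MvPowerSeries (Fin 3) F) ^ q)

lemma J_le_I : Jdl F q ≤ Idl F k q := Ideal.span_mono Set.subset_union_right

lemma Phi_piq (s : MvPowerSeries (Fin 3) F) :
    Phi F k q (piq F q s) = piq F q (ff F k * s) := by
  have hmem : ff F k * liftv F q (piq F q s) - ff F k * s ∈ Jdl F q := by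
    rw [← mul_sub]
    apply Ideal.mul_mem_left
    have h1 := sub_liftv_mem F q s
    have h2 := (Jdl F q).neg_mem h1
    rwa [neg_sub] at h2
  have h2 := piq_eq_zero_of_mem F q _ hmem
  rw [map_sub, sub_eq_zero] at h2
  rw [Phi_def, h2]

noncomputable def psi : (Tri q → F) →ₗ[F] (MvPowerSeries (Fin 3) F ⧸ Idl F k q) :=
  (Ideal.Quotient.mkₐ F (Idl F k q)).toLinearMap ∘ₗ (liftv F q)

lemma psi_piq (s : MvPowerSeries (Fin 3) F) :
    psi F k q (piq F q s) = Ideal.Quotient.mk (Idl F k q) s := by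
  show Ideal.Quotient.mk (Idl F k q) (liftv F q (piq F q s)) = Ideal.Quotient.mk (Idl F k q) s
  rw [Ideal.Quotient.eq]
  apply J_le_I
  have h2 := (Jdl F q).neg_mem (sub_liftv_mem F q s)
  rwa [neg_sub] at h2

lemma psi_surj : Function.Surjective (psi F k q) := by
  intro y
  obtain ⟨s, rfl⟩ := Ideal.Quotient.mk_surjective y
  exact ⟨piq F q s, psi_piq F k q s⟩

lemma ker_psi : LinearMap.ker (psi F k q) = LinearMap.range (Phi F k q) := by
  apply le_antisymm
  · intro v hv
    rw [LinearMap.mem_ker] at hv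
    have hmem : liftv F q v ∈ Idl F k q := by
      rw [← Ideal.Quotient.eq_zero_iff_mem]
      exact hv
    rw [Idl, Set.singleton_union, Ideal.mem_span_insert] at hmem
    obtain ⟨a, z, hz, hlift⟩ := hmem
    refine ⟨piq F q a, ?_⟩
    have : v = piq F q (liftv F q v) := (piq_liftv F q v).symm
    rw [Phi_piq, this, hlift, map_add, piq_eq_zero_of_mem F q z hz, add_zero, mul_comm]
  · rintro _ ⟨w, rfl⟩
    rw [LinearMap.mem_ker]
    show Ideal.Quotient.mk (Idl F k q) (liftv F q (Phi F k q w)) = 0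
    rw [Ideal.Quotient.eq_zero_iff_mem]
    have h1 : liftv F q (Phi F k q w) - ff F k * liftv F q w ∈ Jdl F q := by
      have h2 := sub_liftv_mem F q (ff F k * liftv F q w)
      rw [← Phi_def] at h2
      have h3 := (Jdl F q).neg_mem h2
      rwa [neg_sub] at h3
    have h4 : ff F k * liftv F q w ∈ Idl F k q := by
      apply Ideal.mul_mem_right
      exact Ideal.subset_span (Set.mem_union_left _ rfl)
    have := Ideal.add_mem (Idl F k q) (J_le_I F k q h1) h4
    simpa using this

lemma finrank_quot_eq_ker :
    Module.finrank F (MvPowerSeries (Fin 3) F ⧸ Idl F k q)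
      = Module.finrank F (LinearMap.ker (Phi F k q)) := by
  have e1 : ((Tri q → F) ⧸ LinearMap.ker (psi F k q)) ≃ₗ[F]
      (MvPowerSeries (Fin 3) F ⧸ Idl F k q) :=
    LinearMap.quotKerEquivOfSurjective _ (psi_surj F k q)
  have h1 : Module.finrank F (MvPowerSeries (Fin 3) F ⧸ Idl F k q)
      = Module.finrank F ((Tri q → F) ⧸ LinearMap.range (Phi F k q)) := by
    rw [← ker_psi F k q]
    exact (LinearEquiv.finrank_eq e1).symm
  have h2 := Submodule.finrank_quotient_add_finrank (LinearMap.range (Phi F k q))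
  have h3 := LinearMap.finrank_range_add_finrank_ker (Phi F k q)
  omega


lemma tri_ext {q : ℕ} {x y : Tri q} (h1 : (x.1:ℕ) = (y.1:ℕ)) (h2 : (x.2.1:ℕ) = (y.2.1:ℕ))
    (h3 : (x.2.2:ℕ) = (y.2.2:ℕ)) : x = y := by
  obtain ⟨x1, x2, x3⟩ := x
  obtain ⟨y1, y2, y3⟩ := y
  simp only at h1 h2 h3
  simp [Prod.ext_iff, Fin.ext_iff, h1, h2, h3]

noncomputable def subE (p : Tri q) (e : Fin 3 →₀ ℕ) : Tri q :=
  (⟨(p.1 : ℕ) - e 0, by have := p.1.isLt; omega⟩,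
   ⟨(p.2.1 : ℕ) - e 1, by have := p.2.1.isLt; omega⟩,
   ⟨(p.2.2 : ℕ) - e 2, by have := p.2.2.isLt; omega⟩)

lemma coeff_monomial_mul_liftv (e : Fin 3 →₀ ℕ) (v : Tri q → F) (p : Tri q) :
    MvPowerSeries.coeff (R := F) (emb q p) ((monomial (R := F) e 1) * liftv F q v) =
      if (∀ i, e i ≤ emb q p i) then v (subE q p e) else 0 := by
  rw [coeff_monomial_mul]
  by_cases hc : e ≤ emb q p
  · rw [if_pos hc, if_pos (Finsupp.le_def.mp hc), one_mul, coeff_liftv]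
    have h0 : (emb q p - e : Fin 3 →₀ ℕ) 0 < q := by
      rw [Finsupp.tsub_apply]; have := p.1.isLt; simp only [emb_0]; omega
    have h1 : (emb q p - e : Fin 3 →₀ ℕ) 1 < q := by
      rw [Finsupp.tsub_apply]; have := p.2.1.isLt; simp only [emb_1]; omega
    have h2 : (emb q p - e : Fin 3 →₀ ℕ) 2 < q := by
      rw [Finsupp.tsub_apply]; have := p.2.2.isLt; simp only [emb_2]; omega
    rw [dif_pos ⟨h0, h1, h2⟩]
    congr 1
  · rw [if_neg hc, if_neg (fun h => hc (Finsupp.le_def.mpr h))]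

noncomputable def dec2 (p : Tri q) : Tri q :=
  (⟨(p.1 : ℕ) - 1, by have := p.1.isLt; omega⟩,
   ⟨(p.2.1 : ℕ) - 1, by have := p.2.1.isLt; omega⟩, p.2.2)

noncomputable def deck (p : Tri q) : Tri q :=
  (p.1, p.2.1, ⟨(p.2.2 : ℕ) - k, by have := p.2.2.isLt; omega⟩)

lemma Phi_apply (v : Tri q → F) (p : Tri q) :
    Phi F k q v p =
      (if 0 < (p.1:ℕ) ∧ 0 < (p.2.1:ℕ) then v (dec2 q p) else 0)
        + (if k ≤ (p.2.2:ℕ) then v (deck k q p) else 0) := by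
  have hx0 : (X 0 : MvPowerSeries (Fin 3) F) = monomial (R := F) (Finsupp.single 0 1) 1 := by
    rw [← X_pow_eq, pow_one]
  have hx1 : (X 1 : MvPowerSeries (Fin 3) F) = monomial (R := F) (Finsupp.single 1 1) 1 := by
    rw [← X_pow_eq, pow_one]
  have hx : (X 0 * X 1 : MvPowerSeries (Fin 3) F)
      = monomial (R := F) (Finsupp.single 0 1 + Finsupp.single 1 1) 1 := by
    rw [hx0, hx1, monomial_mul_monomial, one_mul]
  have key : Phi F k q v p
      = MvPowerSeries.coeff (R := F) (emb q p) ((X 0 * X 1 : MvPowerSeries (Fin 3) F) * liftv F q v)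
        + MvPowerSeries.coeff (R := F) (emb q p) ((X 2 ^ k : MvPowerSeries (Fin 3) F) * liftv F q v) := by
    rw [Phi_def]
    show MvPowerSeries.coeff (R := F) (emb q p) (ff F k * liftv F q v) = _
    rw [ff, add_mul, map_add]
  rw [key, hx, X_pow_eq, coeff_monomial_mul_liftv, coeff_monomial_mul_liftv]
  have hiff1 : (∀ i : Fin 3, (Finsupp.single 0 1 + Finsupp.single 1 1 : Fin 3 →₀ ℕ) i ≤ emb q p i)
      ↔ (0 < (p.1:ℕ) ∧ 0 < (p.2.1:ℕ)) := by
    constructor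
    · intro hh
      constructor
      · have := hh 0; simp [Finsupp.single_apply] at this; omega
      · have := hh 1; simp [Finsupp.single_apply] at this; omega
    · rintro ⟨ha, hb⟩ i
      fin_cases i <;> simp [Finsupp.single_apply] <;> omega
  have hiff2 : (∀ i : Fin 3, (Finsupp.single 2 k : Fin 3 →₀ ℕ) i ≤ emb q p i)
      ↔ (k ≤ (p.2.2:ℕ)) := by
    constructor
    · intro hh; have := hh 2; simpa using this
    · intro hc i; fin_cases i <;> simp [Finsupp.single_apply] <;> omega
  have hsub1 : subE q p (Finsupp.single 0 1 + Finsupp.single 1 1) = dec2 q p := by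
    apply tri_ext <;> simp [subE, dec2, Finsupp.single_apply]
  have hsub2 : subE q p (Finsupp.single 2 k) = deck k q p := by
    apply tri_ext <;> simp [subE, deck, Finsupp.single_apply]
  rw [hsub1, hsub2]
  congr 1
  · exact if_congr hiff1 rfl rfl
  · exact if_congr hiff2 rfl rfl

section Char2

variable [CharP F 2]

lemma rel_eq (v : Tri q → F) (hv : Phi F k q v = 0) (p : Tri q) :
    (if 0 < (p.1:ℕ) ∧ 0 < (p.2.1:ℕ) then v (dec2 q p) else 0)
      = (if k ≤ (p.2.2:ℕ) then v (deck k q p) else 0) := by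
  have h := congrFun hv p
  rw [Phi_apply] at h
  have h2 := eq_neg_of_add_eq_zero_left h
  rwa [CharTwo.neg_eq] at h2

lemma relAB (v : Tri q → F) (hv : Phi F k q v = 0) (p : Tri q)
    (ha : 0 < (p.1:ℕ)) (hb : 0 < (p.2.1:ℕ)) (hc : k ≤ (p.2.2:ℕ)) :
    v (dec2 q p) = v (deck k q p) := by
  have h := rel_eq F k q v hv p
  rwa [if_pos ⟨ha, hb⟩, if_pos hc] at h

lemma relA (v : Tri q → F) (hv : Phi F k q v = 0) (p : Tri q)
    (ha : 0 < (p.1:ℕ)) (hb : 0 < (p.2.1:ℕ)) (hc : (p.2.2:ℕ) < k) :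
    v (dec2 q p) = 0 := by
  have h := rel_eq F k q v hv p
  rwa [if_pos ⟨ha, hb⟩, if_neg (by omega)] at h

lemma relB (v : Tri q → F) (hv : Phi F k q v = 0) (p : Tri q)
    (hab : (p.1:ℕ) = 0 ∨ (p.2.1:ℕ) = 0) (hc : k ≤ (p.2.2:ℕ)) :
    v (deck k q p) = 0 := by
  have h := rel_eq F k q v hv p
  rw [if_pos hc] at h
  rw [← h, if_neg (by omega)]

end Char2

def sdep (p : Tri q) : ℕ := q - 1 - max (p.1:ℕ) (p.2.1:ℕ)

noncomputable def ept (p : Tri q) : Tri q :=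
  (⟨(p.1:ℕ) + sdep q p, by have := p.1.isLt; have := p.2.1.isLt; dsimp only [sdep]; omega⟩,
   ⟨(p.2.1:ℕ) + sdep q p, by have := p.1.isLt; have := p.2.1.isLt; dsimp only [sdep]; omega⟩,
   ⟨(p.2.2:ℕ) - sdep q p * k, by have := p.2.2.isLt; omega⟩)

noncomputable def FreeSet : Finset (Tri q) :=
  univ.filter (fun p => ((p.1:ℕ) = q-1 ∨ (p.2.1:ℕ) = q-1)
    ∧ (q-1-(p.2.2:ℕ))/k ≤ min (p.1:ℕ) (p.2.1:ℕ))

lemma mem_FreeSet (p : Tri q) :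
    p ∈ FreeSet k q ↔ ((p.1:ℕ) = q-1 ∨ (p.2.1:ℕ) = q-1)
      ∧ (q-1-(p.2.2:ℕ))/k ≤ min (p.1:ℕ) (p.2.1:ℕ) := by
  simp [FreeSet]

def condE (p : Tri q) : Prop := sdep q p * k ≤ (p.2.2:ℕ) ∧ ept k q p ∈ FreeSet k q

noncomputable def Emap : ({x // x ∈ FreeSet k q} → F) →ₗ[F] (Tri q → F) where
  toFun w p := if h : condE k q p then w ⟨ept k q p, h.2⟩ else 0
  map_add' u v := by funext p; by_cases h : condE k q p <;> simp [h]
  map_smul' a v := by funext p; by_cases h : condE k q p <;> simp [h]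

lemma Emap_apply (w : {x // x ∈ FreeSet k q} → F) (p : Tri q) :
    Emap F k q w p = if h : condE k q p then w ⟨ept k q p, h.2⟩ else 0 := rfl

noncomputable def rhoE : (Tri q → F) →ₗ[F] ({x // x ∈ FreeSet k q} → F) :=
  LinearMap.funLeft F F Subtype.val

lemma rhoE_apply (v : Tri q → F) (z : {x // x ∈ FreeSet k q}) :
    rhoE F k q v z = v z.val := rfl

lemma Emap_step (w : {x // x ∈ FreeSet k q} → F) (p p' : Tri q)
    (h1 : (p'.1:ℕ) = (p.1:ℕ) + 1) (h2 : (p'.2.1:ℕ) = (p.2.1:ℕ) + 1)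
    (h3 : (p'.2.2:ℕ) + k = (p.2.2:ℕ)) :
    Emap F k q w p = Emap F k q w p' := by
  have ha := p.1.isLt; have hb := p.2.1.isLt; have hc := p.2.2.isLt
  have ha' := p'.1.isLt; have hb' := p'.2.1.isLt
  have hs : sdep q p = sdep q p' + 1 := by dsimp only [sdep]; omega
  have hmul : (sdep q p' + 1) * k = sdep q p' * k + k := by ring
  have hept : ept k q p = ept k q p' := by
    apply tri_ext <;> simp only [ept, hs, hmul] <;> omega
  have hcond : condE k q p ↔ condE k q p' := by
    unfold condE
    rw [hept, hs, hmul]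
    constructor
    · rintro ⟨hx, hy⟩; exact ⟨by omega, hy⟩
    · rintro ⟨hx, hy⟩; exact ⟨by omega, hy⟩
  rw [Emap_apply, Emap_apply]
  by_cases h : condE k q p'
  · rw [dif_pos h, dif_pos (hcond.mpr h)]
    congr 1
    exact Subtype.ext hept
  · rw [dif_neg h, dif_neg (fun hx => h (hcond.mp hx))]

lemma Phi_Emap [CharP F 2] (hk : 0 < k) (w : {x // x ∈ FreeSet k q} → F) :
    Phi F k q (Emap F k q w) = 0 := by
  funext p
  rw [Phi_apply, Pi.zero_apply]
  have ha := p.1.isLt; have hb := p.2.1.isLt; have hc := p.2.2.isLt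
  have d1 : ((dec2 q p).1 : ℕ) = (p.1:ℕ) - 1 := rfl
  have d2 : ((dec2 q p).2.1 : ℕ) = (p.2.1:ℕ) - 1 := rfl
  have d3 : ((dec2 q p).2.2 : ℕ) = (p.2.2:ℕ) := rfl
  have k1 : ((deck k q p).1 : ℕ) = (p.1:ℕ) := rfl
  have k2 : ((deck k q p).2.1 : ℕ) = (p.2.1:ℕ) := rfl
  have k3 : ((deck k q p).2.2 : ℕ) = (p.2.2:ℕ) - k := rfl
  by_cases hA : 0 < (p.1:ℕ) ∧ 0 < (p.2.1:ℕ) <;> by_cases hB : k ≤ (p.2.2:ℕ)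
  · rw [if_pos hA, if_pos hB]
    have := Emap_step F k q w (dec2 q p) (deck k q p) (by omega) (by omega) (by omega)
    rw [this, CharTwo.add_self_eq_zero]
  · rw [if_pos hA, if_neg hB, add_zero, Emap_apply, dif_neg]
    rintro ⟨hx, -⟩
    have hs1 : 1 ≤ sdep q (dec2 q p) := by simp only [sdep]; omega
    have hk2 : k ≤ sdep q (dec2 q p) * k := Nat.le_mul_of_pos_left k (by omega)
    omega
  · rw [if_neg hA, if_pos hB, zero_add, Emap_apply, dif_neg]
    rintro ⟨hx, hy⟩
    rw [mem_FreeSet] at hy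
    obtain ⟨-, hy2⟩ := hy
    have hsd : sdep q (deck k q p) = sdep q p := by simp only [sdep]; omega
    have he1 : ((ept k q (deck k q p)).1 : ℕ)
        = ((deck k q p).1:ℕ) + sdep q (deck k q p) := rfl
    have he2 : ((ept k q (deck k q p)).2.1 : ℕ)
        = ((deck k q p).2.1:ℕ) + sdep q (deck k q p) := rfl
    have he3 : ((ept k q (deck k q p)).2.2 : ℕ)
        = ((deck k q p).2.2:ℕ) - sdep q (deck k q p) * k := rfl
    set s := sdep q p with hs
    rw [he1, he2, he3, k1, k2, k3, hsd] at hy2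
    rw [hsd, k3] at hx
    have hmul : (s + 1) * k = s * k + k := by ring
    have hdive : s + 1 ≤ (q - 1 - ((p.2.2:ℕ) - k - s * k)) / k :=
      (Nat.le_div_iff_mul_le hk).mpr (by omega)
    omega
  · rw [if_neg hA, if_neg hB, add_zero]

lemma back [CharP F 2] (v : Tri q → F) (hv : Phi F k q v = 0) :
    ∀ (i : ℕ) (p : Tri q) (_ : i ≤ min (p.1:ℕ) (p.2.1:ℕ)) (h2 : (p.2.2:ℕ) + i * k ≤ q - 1),
    v p = v (⟨(p.1:ℕ) - i, by have := p.1.isLt; omega⟩,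
             ⟨(p.2.1:ℕ) - i, by have := p.2.1.isLt; omega⟩,
             ⟨(p.2.2:ℕ) + i * k, by have := p.2.2.isLt; omega⟩) := by
  intro i
  induction i with
  | zero =>
    intro p h1 h2
    congr 1
    apply tri_ext <;> simp
  | succ i ih =>
    intro p h1 h2
    have ha := p.1.isLt; have hb := p.2.1.isLt; have hc := p.2.2.isLt
    have hmul : (i + 1) * k = i * k + k := by ring
    have hstep := relAB F k q v hv
      (⟨(p.1:ℕ) - i, by omega⟩, ⟨(p.2.1:ℕ) - i, by omega⟩, ⟨(p.2.2:ℕ) + (i+1) * k, by omega⟩)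
      (by simp; omega) (by simp; omega) (by simp; omega)
    have e1 : dec2 q (⟨(p.1:ℕ) - i, by omega⟩, ⟨(p.2.1:ℕ) - i, by omega⟩,
        (⟨(p.2.2:ℕ) + (i+1) * k, by omega⟩ : Fin q)) =
        (⟨(p.1:ℕ) - (i+1), by omega⟩, ⟨(p.2.1:ℕ) - (i+1), by omega⟩,
         ⟨(p.2.2:ℕ) + (i+1) * k, by omega⟩) := by
      apply tri_ext <;> simp [dec2] <;> try omega
    have e2 : deck k q (⟨(p.1:ℕ) - i, by omega⟩, ⟨(p.2.1:ℕ) - i, by omega⟩,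
        (⟨(p.2.2:ℕ) + (i+1) * k, by omega⟩ : Fin q)) =
        (⟨(p.1:ℕ) - i, by omega⟩, ⟨(p.2.1:ℕ) - i, by omega⟩,
         ⟨(p.2.2:ℕ) + i * k, by omega⟩) := by
      apply tri_ext <;> simp [deck] <;> omega
    rw [e1, e2] at hstep
    have hi := ih p (by omega) (by omega)
    rw [hi, ← hstep]

lemma ker_ext [CharP F 2] (hk : 0 < k) (v : Tri q → F) (hv : Phi F k q v = 0) :
    ∀ (j : ℕ) (p : Tri q), q - 1 - max (p.1:ℕ) (p.2.1:ℕ) ≤ j →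
      v p = Emap F k q (rhoE F k q v) p := by
  intro j
  induction j with
  | zero =>
    intro p hp
    have ha := p.1.isLt; have hb := p.2.1.isLt; have hc := p.2.2.isLt
    have hmax : (p.1:ℕ) = q-1 ∨ (p.2.1:ℕ) = q-1 := by omega
    have hs : sdep q p = 0 := by simp only [sdep]; omega
    have hept : ept k q p = p := by
      apply tri_ext <;> simp only [ept, hs] <;> omega
    by_cases hmem : p ∈ FreeSet k q
    · have hcond : condE k q p := ⟨by rw [hs]; omega, by rwa [hept]⟩
      rw [Emap_apply, dif_pos hcond]
      show v p = v (ept k q p)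
      exact (congrArg v hept).symm
    · rw [Emap_apply, dif_neg (fun hco => hmem (hept ▸ hco.2))]
      rw [mem_FreeSet] at hmem
      have hT : min (p.1:ℕ) (p.2.1:ℕ) < (q-1-(p.2.2:ℕ))/k := by
        rcases hmax with h | h
        · by_contra hcon; exact hmem ⟨Or.inl h, by omega⟩
        · by_contra hcon; exact hmem ⟨Or.inr h, by omega⟩
      set m0 := min (p.1:ℕ) (p.2.1:ℕ) with hm0
      have hmul : (m0 + 1) * k = m0 * k + k := by ring
      have hdiv : (m0+1) * k ≤ q-1-(p.2.2:ℕ) := (Nat.le_div_iff_mul_le hk).mp (by omega)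
      have hback := back F k q v hv m0 p (le_refl _) (by omega)
      set p2 : Tri q := (⟨(p.1:ℕ) - m0, by omega⟩, ⟨(p.2.1:ℕ) - m0, by omega⟩,
        ⟨(p.2.2:ℕ) + m0 * k + k, by omega⟩) with hp2
      have q1 : ((p2).1 : ℕ) = (p.1:ℕ) - m0 := rfl
      have q2 : ((p2).2.1 : ℕ) = (p.2.1:ℕ) - m0 := rfl
      have q3 : ((p2).2.2 : ℕ) = (p.2.2:ℕ) + m0 * k + k := rfl
      have hzero := relB F k q v hv p2 (by omega) (by omega)
      have hde : deck k q p2 = (⟨(p.1:ℕ) - m0, by omega⟩, ⟨(p.2.1:ℕ) - m0, by omega⟩,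
          ⟨(p.2.2:ℕ) + m0 * k, by omega⟩) := by
        apply tri_ext <;> simp only [deck, q1, q2, q3] <;> omega
      rw [hde] at hzero
      rw [hback, hzero]
  | succ j ih =>
    intro p hp
    have ha := p.1.isLt; have hb := p.2.1.isLt; have hc := p.2.2.isLt
    by_cases hmax : q - 1 - max (p.1:ℕ) (p.2.1:ℕ) ≤ j
    · exact ih p hmax
    · have ha1 : (p.1:ℕ) + 1 < q := by omega
      have hb1 : (p.2.1:ℕ) + 1 < q := by omega
      by_cases hcc : k ≤ (p.2.2:ℕ)
      · set p' : Tri q := (⟨(p.1:ℕ)+1, ha1⟩, ⟨(p.2.1:ℕ)+1, hb1⟩,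
          ⟨(p.2.2:ℕ) - k, by omega⟩) with hp'
        have q1 : ((p').1 : ℕ) = (p.1:ℕ) + 1 := rfl
        have q2 : ((p').2.1 : ℕ) = (p.2.1:ℕ) + 1 := rfl
        have q3 : ((p').2.2 : ℕ) = (p.2.2:ℕ) - k := rfl
        set pp : Tri q := (⟨(p.1:ℕ)+1, ha1⟩, ⟨(p.2.1:ℕ)+1, hb1⟩, p.2.2) with hpp
        have r1 : ((pp).1 : ℕ) = (p.1:ℕ) + 1 := rfl
        have r2 : ((pp).2.1 : ℕ) = (p.2.1:ℕ) + 1 := rfl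
        have r3 : ((pp).2.2 : ℕ) = (p.2.2:ℕ) := rfl
        have hstep := relAB F k q v hv pp (by omega) (by omega) (by omega)
        have he1 : dec2 q pp = p := by
          apply tri_ext <;> simp only [dec2, r1, r2, r3] <;> omega
        have he2 : deck k q pp = p' := by
          apply tri_ext <;> simp only [deck, r1, r2, r3, q1, q2, q3]
        rw [he1, he2] at hstep
        have hih := ih p' (by omega)
        have hE := Emap_step F k q (rhoE F k q v) p p' (by omega) (by omega) (by omega)
        rw [hstep, hih, ← hE]
      · set pp : Tri q := (⟨(p.1:ℕ)+1, ha1⟩, ⟨(p.2.1:ℕ)+1, hb1⟩, p.2.2) with hpp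
        have r1 : ((pp).1 : ℕ) = (p.1:ℕ) + 1 := rfl
        have r2 : ((pp).2.1 : ℕ) = (p.2.1:ℕ) + 1 := rfl
        have r3 : ((pp).2.2 : ℕ) = (p.2.2:ℕ) := rfl
        have hzero := relA F k q v hv pp (by omega) (by omega) (by omega)
        have he1 : dec2 q pp = p := by
          apply tri_ext <;> simp only [dec2, r1, r2, r3] <;> omega
        rw [he1] at hzero
        rw [hzero, Emap_apply, dif_neg]
        rintro ⟨hx, -⟩
        have hs1 : 1 ≤ sdep q p := by simp only [sdep]; omega
        have hk2 : k ≤ sdep q p * k := Nat.le_mul_of_pos_left k (by omega)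
        omega

lemma rho_Emap (w : {x // x ∈ FreeSet k q} → F) :
    rhoE F k q (Emap F k q w) = w := by
  funext z
  have hz := z.2
  rw [mem_FreeSet] at hz
  have ha := z.1.1.isLt; have hb := z.1.2.1.isLt
  have hs : sdep q z.1 = 0 := by simp only [sdep]; omega
  have hept : ept k q z.1 = z.1 := by
    apply tri_ext <;> simp only [ept, hs] <;> omega
  have hcond : condE k q z.1 := ⟨by rw [hs]; omega, by rw [hept]; exact z.2⟩
  rw [rhoE_apply, Emap_apply, dif_pos hcond]
  congr 1
  exact Subtype.ext hept

lemma finrank_ker_eq_card [CharP F 2] (hk : 0 < k) :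
    Module.finrank F (LinearMap.ker (Phi F k q)) = (FreeSet k q).card := by
  have e : (LinearMap.ker (Phi F k q)) ≃ₗ[F] ({x // x ∈ FreeSet k q} → F) :=
    LinearEquiv.ofLinear
      ((rhoE F k q) ∘ₗ (LinearMap.ker (Phi F k q)).subtype)
      (LinearMap.codRestrict _ (Emap F k q)
        (fun w => LinearMap.mem_ker.mpr (Phi_Emap F k q hk w)))
      (by
        apply LinearMap.ext; intro w
        exact rho_Emap F k q w)
      (by
        apply LinearMap.ext; intro x
        apply Subtype.ext
        funext p
        exact (ker_ext F k q hk x.1 (LinearMap.mem_ker.mp x.2) (q - 1) p (by omega) ).symm)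
  rw [LinearEquiv.finrank_eq e, Module.finrank_pi, Fintype.card_coe]

lemma L1 (t n : ℕ) : (∑ b ∈ range n, if t ≤ b then (1:ℕ) else 0) = n - t := by
  induction n with
  | zero => simp
  | succ n ih =>
    rw [Finset.sum_range_succ, ih]
    by_cases h : t ≤ n <;> simp [h] <;> omega

lemma fin_triple_sum {q : ℕ} (f : ℕ → ℕ → ℕ → ℕ) :
    (∑ p : Tri q, f p.1 p.2.1 p.2.2) = ∑ a ∈ range q, ∑ b ∈ range q, ∑ c ∈ range q, f a b c := by
  rw [Fintype.sum_prod_type]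
  rw [← Fin.sum_univ_eq_sum_range (fun a => ∑ b ∈ range q, ∑ c ∈ range q, f a b c) q]
  apply Finset.sum_congr rfl
  intro a _
  rw [Fintype.sum_prod_type]
  rw [← Fin.sum_univ_eq_sum_range (fun b => ∑ c ∈ range q, f a b c) q]
  apply Finset.sum_congr rfl
  intro b _
  exact Fin.sum_univ_eq_sum_range (fun c => f a b c) q

lemma card_FreeSet (hk : 0 < k) (hq : 0 < q) :
    (FreeSet k q).card + q + 2 * (∑ d ∈ range q, d / k) = 2 * (q * q) := by
  have hcard : (FreeSet k q).card
      = ∑ a ∈ range q, ∑ b ∈ range q, ∑ c ∈ range q,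
          (if ((a = q-1 ∨ b = q-1) ∧ (q-1-c)/k ≤ min a b) then (1:ℕ) else 0) := by
    rw [FreeSet, Finset.card_filter]
    exact fin_triple_sum (fun a b c =>
      if ((a = q-1 ∨ b = q-1) ∧ (q-1-c)/k ≤ min a b) then (1:ℕ) else 0)
  have hpt : ∀ a b c : ℕ,
      ((if ((a = q-1 ∨ b = q-1) ∧ (q-1-c)/k ≤ min a b) then (1:ℕ) else 0)
        + (if (a = q-1 ∧ b = q-1 ∧ (q-1-c)/k ≤ min a b) then 1 else 0))
      = (if (a = q-1 ∧ (q-1-c)/k ≤ min a b) then 1 else 0)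
        + (if (b = q-1 ∧ (q-1-c)/k ≤ min a b) then 1 else 0) := by
    intro a b c
    by_cases h1 : a = q-1 <;> by_cases h2 : b = q-1 <;>
      by_cases h3 : (q-1-c)/k ≤ min a b <;> simp [h1, h2, h3]
  have hX : (∑ a ∈ range q, ∑ b ∈ range q, ∑ c ∈ range q,
      (if (a = q-1 ∧ b = q-1 ∧ (q-1-c)/k ≤ min a b) then (1:ℕ) else 0)) = q := by
    have step1 : ∀ a ∈ range q, (∑ b ∈ range q, ∑ c ∈ range q,
        (if (a = q-1 ∧ b = q-1 ∧ (q-1-c)/k ≤ min a b) then (1:ℕ) else 0))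
        = if a = q-1 then (∑ b ∈ range q, ∑ c ∈ range q,
            (if (b = q-1 ∧ (q-1-c)/k ≤ min a b) then (1:ℕ) else 0)) else 0 := by
      intro a _
      by_cases h : a = q-1 <;> simp [h]
    rw [Finset.sum_congr rfl step1, Finset.sum_ite_eq' (range q) (q-1),
      if_pos (mem_range.mpr (by omega))]
    have step2 : ∀ b ∈ range q, (∑ c ∈ range q,
        (if (b = q-1 ∧ (q-1-c)/k ≤ min (q-1) b) then (1:ℕ) else 0))
        = if b = q-1 then (∑ c ∈ range q,
            (if ((q-1-c)/k ≤ min (q-1) b) then (1:ℕ) else 0)) else 0 := by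
      intro b _
      by_cases h : b = q-1 <;> simp [h]
    rw [Finset.sum_congr rfl step2, Finset.sum_ite_eq' (range q) (q-1),
      if_pos (mem_range.mpr (by omega))]
    have step3 : ∀ c ∈ range q,
        (if ((q-1-c)/k ≤ min (q-1) (q-1)) then (1:ℕ) else 0) = 1 := by
      intro c _
      rw [if_pos]
      have := Nat.div_le_self (q-1-c) k
      omega
    rw [Finset.sum_congr rfl step3, Finset.sum_const, card_range, smul_eq_mul, mul_one]
  have hA : (∑ a ∈ range q, ∑ b ∈ range q, ∑ c ∈ range q,
      (if (a = q-1 ∧ (q-1-c)/k ≤ min a b) then (1:ℕ) else 0))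
      = ∑ c ∈ range q, (q - (q-1-c)/k) := by
    have step1 : ∀ a ∈ range q, (∑ b ∈ range q, ∑ c ∈ range q,
        (if (a = q-1 ∧ (q-1-c)/k ≤ min a b) then (1:ℕ) else 0))
        = if a = q-1 then (∑ b ∈ range q, ∑ c ∈ range q,
            (if ((q-1-c)/k ≤ min a b) then (1:ℕ) else 0)) else 0 := by
      intro a _
      by_cases h : a = q-1 <;> simp [h]
    rw [Finset.sum_congr rfl step1, Finset.sum_ite_eq' (range q) (q-1),
      if_pos (mem_range.mpr (by omega))]
    rw [Finset.sum_comm]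
    apply Finset.sum_congr rfl
    intro c _
    have step2 : ∀ b ∈ range q, (if ((q-1-c)/k ≤ min (q-1) b) then (1:ℕ) else 0)
        = (if ((q-1-c)/k ≤ b) then (1:ℕ) else 0) := by
      intro b hb
      rw [mem_range] at hb
      have hmin : min (q-1) b = b := by omega
      rw [hmin]
    rw [Finset.sum_congr rfl step2, L1]
  have hB : (∑ a ∈ range q, ∑ b ∈ range q, ∑ c ∈ range q,
      (if (b = q-1 ∧ (q-1-c)/k ≤ min a b) then (1:ℕ) else 0))
      = ∑ c ∈ range q, (q - (q-1-c)/k) := by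
    have step1 : ∀ a ∈ range q, (∑ b ∈ range q, ∑ c ∈ range q,
        (if (b = q-1 ∧ (q-1-c)/k ≤ min a b) then (1:ℕ) else 0))
        = ∑ c ∈ range q, (if ((q-1-c)/k ≤ min a (q-1)) then (1:ℕ) else 0) := by
      intro a _
      have inner : ∀ b ∈ range q, (∑ c ∈ range q,
          (if (b = q-1 ∧ (q-1-c)/k ≤ min a b) then (1:ℕ) else 0))
          = if b = q-1 then (∑ c ∈ range q,
              (if ((q-1-c)/k ≤ min a b) then (1:ℕ) else 0)) else 0 := by
        intro b _
        by_cases h : b = q-1 <;> simp [h]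
      rw [Finset.sum_congr rfl inner, Finset.sum_ite_eq' (range q) (q-1),
        if_pos (mem_range.mpr (by omega))]
    rw [Finset.sum_congr rfl step1, Finset.sum_comm]
    apply Finset.sum_congr rfl
    intro c _
    have step2 : ∀ a ∈ range q, (if ((q-1-c)/k ≤ min a (q-1)) then (1:ℕ) else 0)
        = (if ((q-1-c)/k ≤ a) then (1:ℕ) else 0) := by
      intro a ha
      rw [mem_range] at ha
      have hmin : min a (q-1) = a := by omega
      rw [hmin]
    rw [Finset.sum_congr rfl step2, L1]
  have hcomb : (∑ a ∈ range q, ∑ b ∈ range q, ∑ c ∈ range q,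
        (if ((a = q-1 ∨ b = q-1) ∧ (q-1-c)/k ≤ min a b) then (1:ℕ) else 0))
      + (∑ a ∈ range q, ∑ b ∈ range q, ∑ c ∈ range q,
        (if (a = q-1 ∧ b = q-1 ∧ (q-1-c)/k ≤ min a b) then (1:ℕ) else 0))
      = (∑ a ∈ range q, ∑ b ∈ range q, ∑ c ∈ range q,
        (if (a = q-1 ∧ (q-1-c)/k ≤ min a b) then (1:ℕ) else 0))
      + (∑ a ∈ range q, ∑ b ∈ range q, ∑ c ∈ range q,
        (if (b = q-1 ∧ (q-1-c)/k ≤ min a b) then (1:ℕ) else 0)) := by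
    simp only [← Finset.sum_add_distrib]
    exact Finset.sum_congr rfl fun a _ => Finset.sum_congr rfl fun b _ =>
      Finset.sum_congr rfl fun c _ => hpt a b c
  have hsplit : (∑ c ∈ range q, (q - (q-1-c)/k)) + (∑ c ∈ range q, (q-1-c)/k) = q * q := by
    rw [← Finset.sum_add_distrib]
    have step : ∀ c ∈ range q, (q - (q-1-c)/k) + (q-1-c)/k = q := by
      intro c _
      have := Nat.div_le_self (q-1-c) k
      omega
    rw [Finset.sum_congr rfl step, Finset.sum_const, card_range, smul_eq_mul]
  have hrefl : (∑ c ∈ range q, (q-1-c)/k) = ∑ d ∈ range q, d / k :=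
    Finset.sum_range_reflect (fun d => d / k) q
  rw [hcard]
  omega

lemma hk_main [CharP F 2] (hk : 0 < k) (hq : 0 < q) :
    hkDim F (Fin 3) (MvPowerSeries.X 0 * MvPowerSeries.X 1 + MvPowerSeries.X 2 ^ k) q
      + (q + 2 * ∑ d ∈ range q, d / k) = 2 * (q * q) := by
  have h1 : hkDim F (Fin 3) (MvPowerSeries.X 0 * MvPowerSeries.X 1 + MvPowerSeries.X 2 ^ k) q
      = Module.finrank F (MvPowerSeries (Fin 3) F ⧸ Idl F k q) := rfl
  rw [h1, finrank_quot_eq_ker, finrank_ker_eq_card F k q hk]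
  have h2 := card_FreeSet k q hk hq
  omega

lemma sum_shift_div (k r : ℕ) (hk : 0 < k) (hr : r ≤ k) :
    (∑ x ∈ range k, (r + x) / k) = r := by
  have step : ∀ x ∈ range k, (r + x) / k = if (k - r) ≤ x then 1 else 0 := by
    intro x hx
    rw [mem_range] at hx
    by_cases h : k - r ≤ x
    · rw [if_pos h]
      have h2 : r + x < 2 * k := by omega
      exact Nat.div_eq_of_lt_le (by omega) (by omega)
    · rw [if_neg h]
      exact Nat.div_eq_of_lt (by omega)
  rw [Finset.sum_congr rfl step, L1]
  omega

lemma sum_div_block (k : ℕ) (hk : 0 < k) :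
    ∀ m r : ℕ, r ≤ k → 2 * (∑ d ∈ range (k*m+r), d / k) + k*m = k*(m*m) + 2*(r*m) := by
  intro m
  induction m with
  | zero =>
    intro r hr
    have : ∀ d ∈ range (k*0+r), d / k = 0 := by
      intro d hd
      rw [mem_range] at hd
      exact Nat.div_eq_of_lt (by omega)
    rw [Finset.sum_congr rfl this]
    simp
  | succ m ih =>
    intro r hr
    have hre : k*(m+1)+r = (k*m+r) + k := by ring
    rw [hre, Finset.sum_range_add]
    have step : ∀ x ∈ range k, (k*m+r+x) / k = m + (r+x)/k := by
      intro x _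
      have : k*m+r+x = k*m + (r+x) := by ring
      rw [this, Nat.mul_add_div hk]
    rw [Finset.sum_congr rfl step, Finset.sum_add_distrib, Finset.sum_const, card_range,
      smul_eq_mul, sum_shift_div k r hk hr]
    have hih := ih r hr
    have e1 : k*(m+1) = k*m + k := by ring
    have e2 : k*((m+1)*(m+1)) = k*(m*m) + 2*(k*m) + k := by ring
    have e3 : 2*(r*(m+1)) = 2*(r*m) + 2*r := by ring
    omega

lemma hk_poly [CharP F 2] (m r : ℕ) (hk : 0 < k) (hq : 0 < q)
    (hqe : q = k*m+r) (hr : r ≤ k) :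
    (hkDim F (Fin 3) (MvPowerSeries.X 0 * MvPowerSeries.X 1 + MvPowerSeries.X 2 ^ k) q : ℤ)
      = (2*(k:ℤ)*k - k)*(m*m) + (4*k-2)*(r*m) + 2*r*r - r := by
  have h1 := hk_main F k q hk hq
  have h2 := sum_div_block k hk m r hr
  rw [← hqe] at h2
  have hq' : (q:ℤ) = k*m+r := by exact_mod_cast congrArg (Nat.cast : ℕ → ℤ) hqe
  -- cast h1 h2 to ℤ
  have h1' : (hkDim F (Fin 3) (MvPowerSeries.X 0 * MvPowerSeries.X 1
      + MvPowerSeries.X 2 ^ k) q : ℤ) + ((q:ℤ) + 2 * (∑ d ∈ range q, d / k : ℕ)) =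
      2 * ((q:ℤ) * q) := by exact_mod_cast congrArg (Nat.cast : ℕ → ℤ) h1
  have h2' : 2 * ((∑ d ∈ range q, d / k : ℕ) : ℤ) + (k:ℤ)*m = (k:ℤ)*(m*m) + 2*(r*m) := by
    exact_mod_cast congrArg (Nat.cast : ℕ → ℤ) h2
  rw [hq'] at h1'
  linear_combination h1' - h2'

lemma pow2_mod3_s6 : ∀ n : ℕ, (n % 2 = 0 → 2^n % 3 = 1) ∧ (n % 2 = 1 → 2^n % 3 = 2) := by
  intro n
  induction n with
  | zero => simp
  | succ n ih =>
    have h1 : 2^(n+1) % 3 = ((2^n % 3) * (2 % 3)) % 3 := by rw [pow_succ, Nat.mul_mod]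
    obtain ⟨ih0, ih1⟩ := ih
    constructor <;> intro h
    · have := ih1 (by omega); omega
    · have := ih0 (by omega); omega

lemma pow2_mod5_s6 : ∀ n : ℕ, (n % 4 = 0 → 2^n % 5 = 1) ∧ (n % 4 = 1 → 2^n % 5 = 2)
    ∧ (n % 4 = 2 → 2^n % 5 = 4) ∧ (n % 4 = 3 → 2^n % 5 = 3) := by
  intro n
  induction n with
  | zero => simp
  | succ n ih =>
    have h1 : 2^(n+1) % 5 = ((2^n % 5) * (2 % 5)) % 5 := by rw [pow_succ, Nat.mul_mod]
    obtain ⟨ih0, ih1, ih2, ih3⟩ := ih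
    refine ⟨fun h => ?_, fun h => ?_, fun h => ?_, fun h => ?_⟩
    · have := ih3 (by omega); omega
    · have := ih0 (by omega); omega
    · have := ih1 (by omega); omega
    · have := ih2 (by omega); omega

end HKaux

/-- Lemma 1.9(b) of the paper, coefficientwise: for `char F = 2` and
`e_n(uv + x^k) = dim_F F[[u,v,x]]/(uv + x^k, u^q, v^q, x^q)` with `q = 2^n`, one has,
for every `n ≥ 1`,
`2(e_n(uv+x³) - 4e_(n-1)(uv+x³)) - (e_n(uv+x⁵) - 4e_(n-1)(uv+x⁵)) = 2` if `n` is odd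
and `= 0` if `n` is even; moreover `2·e_0(uv+x³) - e_0(uv+x⁵) = 1`. -/
theorem stmt6 (F : Type) [Field F] [CharP F 2] :
    (∀ n : ℕ, 1 ≤ n →
      2 * ((hkDim F (Fin 3)
            (MvPowerSeries.X 0 * MvPowerSeries.X 1 + MvPowerSeries.X 2 ^ 3) (2 ^ n) : ℤ)
          - 4 * hkDim F (Fin 3)
            (MvPowerSeries.X 0 * MvPowerSeries.X 1 + MvPowerSeries.X 2 ^ 3) (2 ^ (n - 1)))
        - ((hkDim F (Fin 3)
            (MvPowerSeries.X 0 * MvPowerSeries.X 1 + MvPowerSeries.X 2 ^ 5) (2 ^ n) : ℤ)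
          - 4 * hkDim F (Fin 3)
            (MvPowerSeries.X 0 * MvPowerSeries.X 1 + MvPowerSeries.X 2 ^ 5) (2 ^ (n - 1)))
        = if Odd n then 2 else 0) ∧
    2 * (hkDim F (Fin 3)
          (MvPowerSeries.X 0 * MvPowerSeries.X 1 + MvPowerSeries.X 2 ^ 3) (2 ^ 0) : ℤ)
      - (hkDim F (Fin 3)
          (MvPowerSeries.X 0 * MvPowerSeries.X 1 + MvPowerSeries.X 2 ^ 5) (2 ^ 0) : ℤ)
      = 1 := by
  constructor
  · intro n hn
    obtain ⟨n', rfl⟩ : ∃ n', n = n' + 1 := ⟨n - 1, by omega⟩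
    simp only [Nat.add_sub_cancel]
    have hq'pos : 0 < 2^n' := pow_pos (by norm_num) n'
    have hqpos : 0 < 2^(n'+1) := pow_pos (by norm_num) (n'+1)
    have hq2 : (2:ℕ)^(n'+1) = 2 * 2^n' := by rw [pow_succ]; ring
    have h3 := HKaux.pow2_mod3_s6 n'
    have h3s := HKaux.pow2_mod3_s6 (n'+1)
    have h5 := HKaux.pow2_mod5_s6 n'
    have h5s := HKaux.pow2_mod5_s6 (n'+1)
    have hd3 := Nat.div_add_mod (2^n') 3
    have hd3s := Nat.div_add_mod (2^(n'+1)) 3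
    have hd5 := Nat.div_add_mod (2^n') 5
    have hd5s := Nat.div_add_mod (2^(n'+1)) 5
    set a' := 2^n' / 3 with ha'
    set a := 2^(n'+1) / 3 with ha
    set b' := 2^n' / 5 with hb'
    set b := 2^(n'+1) / 5 with hb
    have h4 : n' % 4 = 0 ∨ n' % 4 = 1 ∨ n' % 4 = 2 ∨ n' % 4 = 3 := by omega
    rcases h4 with h4 | h4 | h4 | h4
    · have r3' : 2^n' % 3 = 1 := h3.1 (by omega)
      have r3 : 2^(n'+1) % 3 = 2 := h3s.2 (by omega)
      have r5' : 2^n' % 5 = 1 := h5.1 (by omega)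
      have r5 : 2^(n'+1) % 5 = 2 := h5s.2.1 (by omega)
      have H3' := HKaux.hk_poly F 3 (2^n') a' 1 (by norm_num) hq'pos (by omega) (by norm_num)
      have H3 := HKaux.hk_poly F 3 (2^(n'+1)) a 2 (by norm_num) hqpos (by omega) (by norm_num)
      have H5' := HKaux.hk_poly F 5 (2^n') b' 1 (by norm_num) hq'pos (by omega) (by norm_num)
      have H5 := HKaux.hk_poly F 5 (2^(n'+1)) b 2 (by norm_num) hqpos (by omega) (by norm_num)
      rw [H3, H3', H5, H5', if_pos (by rw [Nat.odd_iff]; omega)]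
      have hm3 : a = 2*a' := by omega
      have hm5 : b = 2*b' := by omega
      have hm3' : (a:ℤ) = 2*(a':ℤ) := by exact_mod_cast congrArg (Nat.cast : ℕ → ℤ) hm3
      have hm5' : (b:ℤ) = 2*(b':ℤ) := by exact_mod_cast congrArg (Nat.cast : ℕ → ℤ) hm5
      rw [hm3', hm5']
      push_cast
      ring
    · have r3' : 2^n' % 3 = 2 := h3.2 (by omega)
      have r3 : 2^(n'+1) % 3 = 1 := h3s.1 (by omega)
      have r5' : 2^n' % 5 = 2 := h5.2.1 (by omega)
      have r5 : 2^(n'+1) % 5 = 4 := h5s.2.2.1 (by omega)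
      have H3' := HKaux.hk_poly F 3 (2^n') a' 2 (by norm_num) hq'pos (by omega) (by norm_num)
      have H3 := HKaux.hk_poly F 3 (2^(n'+1)) a 1 (by norm_num) hqpos (by omega) (by norm_num)
      have H5' := HKaux.hk_poly F 5 (2^n') b' 2 (by norm_num) hq'pos (by omega) (by norm_num)
      have H5 := HKaux.hk_poly F 5 (2^(n'+1)) b 4 (by norm_num) hqpos (by omega) (by norm_num)
      rw [H3, H3', H5, H5', if_neg (by rw [Nat.odd_iff]; omega)]
      have hm3 : a = 2*a' + 1 := by omega
      have hm5 : b = 2*b' := by omega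
      have hm3' : (a:ℤ) = 2*(a':ℤ) + 1 := by exact_mod_cast congrArg (Nat.cast : ℕ → ℤ) hm3
      have hm5' : (b:ℤ) = 2*(b':ℤ) := by exact_mod_cast congrArg (Nat.cast : ℕ → ℤ) hm5
      rw [hm3', hm5']
      push_cast
      ring
    · have r3' : 2^n' % 3 = 1 := h3.1 (by omega)
      have r3 : 2^(n'+1) % 3 = 2 := h3s.2 (by omega)
      have r5' : 2^n' % 5 = 4 := h5.2.2.1 (by omega)
      have r5 : 2^(n'+1) % 5 = 3 := h5s.2.2.2 (by omega)
      have H3' := HKaux.hk_poly F 3 (2^n') a' 1 (by norm_num) hq'pos (by omega) (by norm_num)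
      have H3 := HKaux.hk_poly F 3 (2^(n'+1)) a 2 (by norm_num) hqpos (by omega) (by norm_num)
      have H5' := HKaux.hk_poly F 5 (2^n') b' 4 (by norm_num) hq'pos (by omega) (by norm_num)
      have H5 := HKaux.hk_poly F 5 (2^(n'+1)) b 3 (by norm_num) hqpos (by omega) (by norm_num)
      rw [H3, H3', H5, H5', if_pos (by rw [Nat.odd_iff]; omega)]
      have hm3 : a = 2*a' := by omega
      have hm5 : b = 2*b' + 1 := by omega
      have hm3' : (a:ℤ) = 2*(a':ℤ) := by exact_mod_cast congrArg (Nat.cast : ℕ → ℤ) hm3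
      have hm5' : (b:ℤ) = 2*(b':ℤ) + 1 := by exact_mod_cast congrArg (Nat.cast : ℕ → ℤ) hm5
      rw [hm3', hm5']
      push_cast
      ring
    · have r3' : 2^n' % 3 = 2 := h3.2 (by omega)
      have r3 : 2^(n'+1) % 3 = 1 := h3s.1 (by omega)
      have r5' : 2^n' % 5 = 3 := h5.2.2.2 (by omega)
      have r5 : 2^(n'+1) % 5 = 1 := h5s.1 (by omega)
      have H3' := HKaux.hk_poly F 3 (2^n') a' 2 (by norm_num) hq'pos (by omega) (by norm_num)
      have H3 := HKaux.hk_poly F 3 (2^(n'+1)) a 1 (by norm_num) hqpos (by omega) (by norm_num)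
      have H5' := HKaux.hk_poly F 5 (2^n') b' 3 (by norm_num) hq'pos (by omega) (by norm_num)
      have H5 := HKaux.hk_poly F 5 (2^(n'+1)) b 1 (by norm_num) hqpos (by omega) (by norm_num)
      rw [H3, H3', H5, H5', if_neg (by rw [Nat.odd_iff]; omega)]
      have hm3 : a = 2*a' + 1 := by omega
      have hm5 : b = 2*b' + 1 := by omega
      have hm3' : (a:ℤ) = 2*(a':ℤ) + 1 := by exact_mod_cast congrArg (Nat.cast : ℕ → ℤ) hm3
      have hm5' : (b:ℤ) = 2*(b':ℤ) + 1 := by exact_mod_cast congrArg (Nat.cast : ℕ → ℤ) hm5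
      rw [hm3', hm5']
      push_cast
      ring
  · have H3 := HKaux.hk_poly F 3 (2^0) 0 1 (by norm_num) (by norm_num) (by norm_num) (by norm_num)
    have H5 := HKaux.hk_poly F 5 (2^0) 0 1 (by norm_num) (by norm_num) (by norm_num) (by norm_num)
    rw [H3, H5]
    norm_num
end
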